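/- arXiv:1503.05168 — 2 statements merged into one kernel-verified Lean document; each statement's English description precedes it below -/
import Mathlib

section
/- Let N = 2, M = 1, ξ⁰_1 > ξ⁰_2, ξ̄(0) > 0, and set t₀ = 2 ln(ξ⁰_1 / ξ̄(0)). Let α be a control optimal for the final cost with trajectory ξ. Then T ≥ t₀ if and only if ξ_1(T) = ξ_2(T); and if T ≥ t₀, then α_1(t) + α_2(t) = 1 for almost every t ∈ [0,T] (so that ξ̄(t) = ξ̄(0) e^{−t/2}). Moreover, the control given by (α_1,α_2)(t) = (1,0) for t ∈ [0,t₀) and (α_1,α_2)(t) = (1/2,1/2) for t ∈ [t₀,T] is optimal. -/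
open MeasureTheory Real Set

noncomputable section

/-- An admissible control for two agents: measurable, valued in `[0,1]` on `[0,T]`,
with `α_1(t) + α_2(t) ≤ M` for every `t ∈ [0,T]`. -/
def IsAdmissible2 (T M : ℝ) (α : ℝ → ℕ → ℝ) : Prop :=
  (∀ i, Measurable fun t => α t i) ∧
  (∀ t ∈ Set.Icc (0 : ℝ) T, ∀ i ∈ Finset.Icc 1 2, 0 ≤ α t i ∧ α t i ≤ 1) ∧
  (∀ t ∈ Set.Icc (0 : ℝ) T, α t 1 + α t 2 ≤ M)

/-- The mean `ξ̄ = (ξ_1 + ξ_2)/2`. -/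
def xbar2 (ξ : ℝ → ℕ → ℝ) (s : ℝ) : ℝ := (ξ s 1 + ξ s 2) / 2

/-- The trajectory of a control `α` with initial state `ξ0`. -/
def IsTrajectory2 (T : ℝ) (α : ℝ → ℕ → ℝ) (ξ0 : ℕ → ℝ) (ξ : ℝ → ℕ → ℝ) : Prop :=
  (∀ i, ContinuousOn (fun t => ξ t i) (Set.Icc 0 T)) ∧
  (∀ t ∈ Set.Icc (0 : ℝ) T, ∀ i ∈ Finset.Icc 1 2,
    ξ t i = ξ0 i + ∫ s in (0 : ℝ)..t, (-(ξ s i) + (1 - α s i) * xbar2 ξ s))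

/-- The migration functional `𝕍(t) = (ξ_1(t)² + ξ_2(t)²)/2`. -/
def migV2 (ξ : ℝ → ℕ → ℝ) (t : ℝ) : ℝ := ((ξ t 1) ^ 2 + (ξ t 2) ^ 2) / 2

/-- `α` (with trajectory `ξ`) is optimal for the final cost `𝕍(T)`. -/
def IsOptimalFinal2 (T M : ℝ) (ξ0 : ℕ → ℝ) (α ξ : ℝ → ℕ → ℝ) : Prop :=
  IsAdmissible2 T M α ∧ IsTrajectory2 T α ξ0 ξ ∧
  ∀ β η, IsAdmissible2 T M β → IsTrajectory2 T β ξ0 η → migV2 ξ T ≤ migV2 η T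

/-- clamp to [0,T] -/
def cl (T t : ℝ) : ℝ := max 0 (min t T)

lemma cl_cont (T : ℝ) : Continuous (cl T) :=
  continuous_const.max (continuous_id.min continuous_const)

lemma cl_mem {T : ℝ} (hT : 0 ≤ T) (t : ℝ) : cl T t ∈ Icc (0:ℝ) T :=
  ⟨le_max_left _ _, max_le (by linarith) (min_le_right _ _)⟩

lemma cl_eq {T t : ℝ} (h : t ∈ Icc (0:ℝ) T) : cl T t = t := by
  simp only [cl, min_eq_left h.2, max_eq_right h.1]

lemma integral_c_exp (c r : ℝ) (hr : r ≠ 0) (t : ℝ) :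
    ∫ s in (0:ℝ)..t, c * Real.exp (-(r*s)) = c/r * (1 - Real.exp (-(r*t))) := by
  have h : ∀ x ∈ uIcc (0:ℝ) t, HasDerivAt (fun s => -(c/r) * Real.exp (-(r*s)))
      (c * Real.exp (-(r*x))) x := by
    intro x _
    have h1 : HasDerivAt (fun s : ℝ => -(r*s)) (-r) x := by
      simpa using ((hasDerivAt_id x).const_mul (-r))
    have := (h1.exp).const_mul (-(c/r))
    refine this.congr_deriv ?_
    field_simp
  rw [intervalIntegral.integral_eq_sub_of_hasDerivAt h ((Continuous.intervalIntegrable (by fun_prop) 0 t))]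
  simp [Real.exp_zero]
  ring

lemma II_aux {g : ℝ → ℝ} (hg : Measurable g) {t C : ℝ} (h0 : 0 ≤ t)
    (hb : ∀ s ∈ Ioc (0:ℝ) t, |g s| ≤ C) : IntervalIntegrable g volume 0 t := by
  rw [intervalIntegrable_iff_integrableOn_Ioc_of_le h0]
  refine Integrable.mono' (g := fun _ => C) ?_ ?_ ?_
  · exact integrableOn_const measure_Ioc_lt_top.ne
  · exact hg.aestronglyMeasurable
  · exact (ae_restrict_iff' measurableSet_Ioc).2 (Filter.Eventually.of_forall hb)


lemma volterra_key (r : ℝ) (hr : r ≠ 0) (f : ℝ → ℝ) (hf : Continuous f) (t : ℝ) :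
    Real.exp (r * t) * (∫ s in (0:ℝ)..t, (f s - f 0 * Real.exp (-(r * s))))
      = ∫ s in (0:ℝ)..t, Real.exp (r * s) * (f s - f 0 + r * ∫ u in (0:ℝ)..s, f u) := by
  set g : ℝ → ℝ := fun s => f s - f 0 * Real.exp (-(r * s)) with hg
  have hgc : Continuous g := by fun_prop
  set k : ℝ → ℝ := fun x => ∫ s in (0:ℝ)..x, g s with hk
  have hkd : ∀ x, HasDerivAt k (g x) x := fun x =>
    intervalIntegral.integral_hasDerivAt_right (hgc.intervalIntegrable 0 x)
      (hgc.stronglyMeasurable.stronglyMeasurableAtFilter) hgc.continuousAt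
  have hprimc : Continuous (fun s => ∫ u in (0:ℝ)..s, f u) :=
    intervalIntegral.continuous_primitive (fun a b => hf.intervalIntegrable a b) 0
  set G : ℝ → ℝ := fun s => Real.exp (r * s) * (f s - f 0 + r * ∫ u in (0:ℝ)..s, f u) with hG
  have hGc : Continuous G := by fun_prop
  set R : ℝ → ℝ := fun x => ∫ s in (0:ℝ)..x, G s with hR
  have hRd : ∀ x, HasDerivAt R (G x) x := fun x =>
    intervalIntegral.integral_hasDerivAt_right (hGc.intervalIntegrable 0 x)
      (hGc.stronglyMeasurable.stronglyMeasurableAtFilter) hGc.continuousAt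
  set F : ℝ → ℝ := fun x => Real.exp (r * x) * k x - R x with hF
  have hFd : ∀ x, HasDerivAt F 0 x := by
    intro x
    have he : HasDerivAt (fun x : ℝ => Real.exp (r * x)) (r * Real.exp (r * x)) x := by
      simpa [mul_comm] using (((hasDerivAt_id x).const_mul r).exp)
    have h1 : HasDerivAt (fun x => Real.exp (r * x) * k x)
        (r * Real.exp (r * x) * k x + Real.exp (r * x) * g x) x := he.mul (hkd x)
    have h2 := (h1.sub (hRd x))
    refine h2.congr_deriv ?_
    have hkx : k x = (∫ u in (0:ℝ)..x, f u) - f 0 / r * (1 - Real.exp (-(r*x))) := by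
      show (∫ s in (0:ℝ)..x, (f s - f 0 * Real.exp (-(r*s)))) = _
      rw [intervalIntegral.integral_sub (hf.intervalIntegrable 0 x)
        (Continuous.intervalIntegrable (by fun_prop) 0 x), integral_c_exp (f 0) r hr x]
    rw [hkx]
    simp only [hG, hg]
    field_simp
    ring
  have hconst := is_const_of_deriv_eq_zero (f := F)
    (fun x => (hFd x).differentiableAt) (fun x => (hFd x).deriv) t 0
  have hF0 : F 0 = 0 := by simp [hF, hk, hR]
  have hFt : Real.exp (r * t) * k t - R t = 0 := hconst.trans hF0
  have : Real.exp (r * t) * k t = R t := by linarith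
  exact this

lemma volterra_lower (r : ℝ) (hr : 0 < r) (f D : ℝ → ℝ) (hf : Continuous f) (T : ℝ)
    (hD : ∀ t ∈ Set.Icc (0:ℝ) T, f t - f 0 + r * ∫ s in (0:ℝ)..t, f s = D t)
    (hmono : MonotoneOn D (Set.Icc 0 T)) :
    ∀ t ∈ Set.Icc (0:ℝ) T, (f 0 + D t) * Real.exp (-(r * t)) ≤ f t := by
  intro t ht
  obtain ⟨ht0, htT⟩ := ht
  have h0T : (0:ℝ) ∈ Icc (0:ℝ) T := ⟨le_refl _, le_trans ht0 htT⟩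
  have hD0 : D 0 = 0 := by
    have := hD 0 h0T; simpa using this.symm
  have hDt0 : 0 ≤ D t := hD0 ▸ hmono h0T ⟨ht0, htT⟩ ht0
  have hprimc : Continuous (fun s => ∫ u in (0:ℝ)..s, f u) :=
    intervalIntegral.continuous_primitive (fun a b => hf.intervalIntegrable a b) 0
  have key := volterra_key r (ne_of_gt hr) f hf t
  set E := Real.exp (r * t) with hE
  set e := Real.exp (-(r * t)) with he
  have hEe : E * e = 1 := by rw [hE, he, ← Real.exp_add]; simp
  have hepos : 0 < e := Real.exp_pos _
  have hbound : (∫ s in (0:ℝ)..t, Real.exp (r * s) * (f s - f 0 + r * ∫ u in (0:ℝ)..s, f u))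
      ≤ D t / r * (E - 1) := by
    have h1 : (∫ s in (0:ℝ)..t, Real.exp (r * s) * (f s - f 0 + r * ∫ u in (0:ℝ)..s, f u))
        ≤ ∫ s in (0:ℝ)..t, D t * Real.exp (-(-r * s)) := by
      apply intervalIntegral.integral_mono_on ht0
      · exact Continuous.intervalIntegrable (by fun_prop) 0 t
      · exact Continuous.intervalIntegrable (by fun_prop) 0 t
      · intro x hx
        have hxm : x ∈ Icc (0:ℝ) T := ⟨hx.1, le_trans hx.2 htT⟩
        rw [hD x hxm]
        have hDx : D x ≤ D t := hmono hxm ⟨ht0, htT⟩ hx.2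
        have hex : Real.exp (-(-r * x)) = Real.exp (r * x) := by ring_nf
        rw [hex]
        calc Real.exp (r * x) * D x ≤ Real.exp (r * x) * D t :=
              mul_le_mul_of_nonneg_left hDx (Real.exp_nonneg _)
          _ = D t * Real.exp (r * x) := by ring
    rw [integral_c_exp (D t) (-r) (neg_ne_zero.mpr (ne_of_gt hr)) t] at h1
    have hex2 : Real.exp (-(-r * t)) = E := by rw [hE]; ring_nf
    rw [hex2] at h1
    calc _ ≤ D t / (-r) * (1 - E) := h1
      _ = D t / r * (E - 1) := by ring
  set kt := ∫ s in (0:ℝ)..t, (f s - f 0 * Real.exp (-(r * s))) with hkt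
  have hk1 : E * kt ≤ D t / r * (E - 1) := key ▸ hbound
  have hk2 : kt ≤ D t / r * (1 - e) := by
    have := mul_le_mul_of_nonneg_left hk1 hepos.le
    calc kt = e * (E * kt) := by rw [← mul_assoc, mul_comm e E, hEe, one_mul]
      _ ≤ e * (D t / r * (E - 1)) := this
      _ = D t / r * (e * E - e) := by ring
      _ = D t / r * (1 - e) := by rw [mul_comm e E, hEe]
  have hsplit : kt = (∫ s in (0:ℝ)..t, f s) - f 0 / r * (1 - e) := by
    rw [hkt, intervalIntegral.integral_sub (hf.intervalIntegrable 0 t)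
      (Continuous.intervalIntegrable (by fun_prop) 0 t), integral_c_exp (f 0) r (ne_of_gt hr) t]
  have hft := hD t ⟨ht0, htT⟩
  have hrA : r * (∫ s in (0:ℝ)..t, f s) = r * kt + f 0 * (1 - e) := by
    rw [hsplit]; field_simp; ring
  have hrk : r * kt ≤ D t * (1 - e) := by
    have := mul_le_mul_of_nonneg_left hk2 hr.le
    calc r * kt ≤ r * (D t / r * (1 - e)) := this
      _ = D t * (1 - e) := by field_simp
  nlinarith [hft, hrA, hrk]

lemma volterra_eq (r : ℝ) (hr : r ≠ 0) (f : ℝ → ℝ) (hf : Continuous f) (T : ℝ)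
    (hD : ∀ t ∈ Set.Icc (0:ℝ) T, f t - f 0 + r * ∫ s in (0:ℝ)..t, f s = 0) :
    ∀ t ∈ Set.Icc (0:ℝ) T, f t = f 0 * Real.exp (-(r * t)) := by
  intro t ht
  obtain ⟨ht0, htT⟩ := ht
  have key := volterra_key r hr f hf t
  have hzero : (∫ s in (0:ℝ)..t, Real.exp (r * s) * (f s - f 0 + r * ∫ u in (0:ℝ)..s, f u)) = 0 := by
    have heq : EqOn (fun s => Real.exp (r * s) * (f s - f 0 + r * ∫ u in (0:ℝ)..s, f u))
        (fun _ => (0:ℝ)) (uIcc 0 t) := by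
      intro x hx
      rw [uIcc_of_le ht0] at hx
      have hxm : x ∈ Icc (0:ℝ) T := ⟨hx.1, le_trans hx.2 htT⟩
      simp only [hD x hxm, mul_zero]
    rw [intervalIntegral.integral_congr heq, intervalIntegral.integral_zero]
  rw [hzero] at key
  have hkt : (∫ s in (0:ℝ)..t, (f s - f 0 * Real.exp (-(r * s)))) = 0 := by
    have hEne : Real.exp (r * t) ≠ 0 := (Real.exp_pos _).ne'
    exact (mul_eq_zero.mp key).resolve_left hEne
  have hsplit : (∫ s in (0:ℝ)..t, (f s - f 0 * Real.exp (-(r * s))))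
      = (∫ s in (0:ℝ)..t, f s) - f 0 / r * (1 - Real.exp (-(r * t))) := by
    rw [intervalIntegral.integral_sub (hf.intervalIntegrable 0 t)
      (Continuous.intervalIntegrable (by fun_prop) 0 t), integral_c_exp (f 0) r hr t]
  have hft := hD t ⟨ht0, htT⟩
  have : r * (∫ s in (0:ℝ)..t, f s) = f 0 * (1 - Real.exp (-(r * t))) := by
    rw [hsplit] at hkt
    have : (∫ s in (0:ℝ)..t, f s) = f 0 / r * (1 - Real.exp (-(r * t))) := by linarith
    rw [this]; field_simp
  nlinarith [hft, this]

section traj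
variable {T : ℝ} {ξ0 : ℕ → ℝ} {α ξ : ℝ → ℕ → ℝ}

lemma mem12 : (1 : ℕ) ∈ Finset.Icc 1 2 ∧ (2:ℕ) ∈ Finset.Icc 1 2 := by decide

lemma traj_cont (hT : 0 < T) (htraj : IsTrajectory2 T α ξ0 ξ) (i : ℕ) :
    Continuous (fun s => ξ (cl T s) i) :=
  (htraj.1 i).comp_continuous (cl_cont T) (cl_mem hT.le)

lemma traj_init (hT : 0 < T) (htraj : IsTrajectory2 T α ξ0 ξ) :
    ξ 0 1 = ξ0 1 ∧ ξ 0 2 = ξ0 2 := by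
  have h0 : (0:ℝ) ∈ Icc (0:ℝ) T := ⟨le_refl _, hT.le⟩
  constructor
  · have := htraj.2 0 h0 1 mem12.1; simpa using this
  · have := htraj.2 0 h0 2 mem12.2; simpa using this

/-- integrability of the forcing term `(1-α_i) * (F/2)` up to time T -/
lemma force_int (hT : 0 < T) (hadm : IsAdmissible2 T 1 α) (htraj : IsTrajectory2 T α ξ0 ξ)
    (i : ℕ) (hi : i ∈ Finset.Icc 1 2) :
    IntervalIntegrable (fun s => (1 - α s i) * ((ξ (cl T s) 1 + ξ (cl T s) 2)/2)) volume 0 T := by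
  obtain ⟨C, hC⟩ := (isCompact_Icc (a := (0:ℝ)) (b := T)).exists_bound_of_continuousOn
    ((htraj.1 1).add (htraj.1 2))
  refine II_aux ((measurable_const.sub (hadm.1 i)).mul
      ((((traj_cont hT htraj 1).add (traj_cont hT htraj 2)).measurable).div_const 2))
      hT.le (C := |C|/2) ?_
  intro s hs
  have hsm : s ∈ Icc (0:ℝ) T := ⟨hs.1.le, hs.2⟩
  have hb := hadm.2.1 s hsm i hi
  have h1 : |1 - α s i| ≤ 1 := by rw [abs_le]; constructor <;> linarith [hb.1, hb.2]
  have h2 : |(ξ (cl T s) 1 + ξ (cl T s) 2)/2| ≤ |C|/2 := by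
    rw [cl_eq hsm]
    have h3 := hC s hsm
    rw [abs_div]
    have h4 : |ξ s 1 + ξ s 2| ≤ |C| := le_trans h3 (le_abs_self C)
    simp only [abs_two]
    linarith
  calc |(1 - α s i) * ((ξ (cl T s) 1 + ξ (cl T s) 2)/2)|
      = |1 - α s i| * |(ξ (cl T s) 1 + ξ (cl T s) 2)/2| := abs_mul _ _
    _ ≤ 1 * (|C|/2) := mul_le_mul h1 h2 (abs_nonneg _) zero_le_one
    _ = |C|/2 := one_mul _

/-- the basic integral identity for component i, in clamped form -/
lemma traj_id (hT : 0 < T) (hadm : IsAdmissible2 T 1 α) (htraj : IsTrajectory2 T α ξ0 ξ)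
    (i : ℕ) (hi : i ∈ Finset.Icc 1 2) :
    ∀ t ∈ Icc (0:ℝ) T, ξ t i = ξ0 i
      + ((∫ s in (0:ℝ)..t, (1 - α s i) * ((ξ (cl T s) 1 + ξ (cl T s) 2)/2))
         - ∫ s in (0:ℝ)..t, ξ (cl T s) i) := by
  intro t ht
  have h := htraj.2 t ht i hi
  rw [h]
  congr 1
  have heq : EqOn (fun s => -(ξ s i) + (1 - α s i) * xbar2 ξ s)
      (fun s => (1 - α s i) * ((ξ (cl T s) 1 + ξ (cl T s) 2)/2) - ξ (cl T s) i)
      (uIcc 0 t) := by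
    intro x hx
    rw [uIcc_of_le ht.1] at hx
    have hxm : x ∈ Icc (0:ℝ) T := ⟨hx.1, le_trans hx.2 ht.2⟩
    simp only [cl_eq hxm, xbar2]
    ring
  rw [intervalIntegral.integral_congr heq]
  exact intervalIntegral.integral_sub
    ((force_int hT hadm htraj i hi).mono_set
      (by rw [uIcc_of_le ht.1, uIcc_of_le (ht.1.trans ht.2)]; exact Icc_subset_Icc le_rfl ht.2))
    (((traj_cont hT htraj i).intervalIntegrable 0 t))
end traj


section traj2
variable {T : ℝ} {ξ0 : ℕ → ℝ} {α ξ : ℝ → ℕ → ℝ}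

lemma traj_main (hT : 0 < T) (hb : 0 < ξ0 1 + ξ0 2)
    (hadm : IsAdmissible2 T 1 α) (htraj : IsTrajectory2 T α ξ0 ξ) :
    (∀ t ∈ Icc (0:ℝ) T, (ξ0 1 + ξ0 2) * Real.exp (-(1/2 * t)) ≤ ξ t 1 + ξ t 2)
    ∧ (ξ0 1 * Real.exp (-(1 * T)) ≤ ξ T 1)
    ∧ ((ξ T 1 + ξ T 2 = (ξ0 1 + ξ0 2) * Real.exp (-(1/2 * T)) ∨
          (∀ t ∈ Icc (0:ℝ) T, α t 1 + α t 2 = 1)) →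
        (∀ᵐ t, t ∈ Icc (0:ℝ) T → α t 1 + α t 2 = 1) ∧
        ∀ t ∈ Icc (0:ℝ) T, ξ t 1 + ξ t 2 = (ξ0 1 + ξ0 2) * Real.exp (-(1/2 * t))) := by
  have h0T : (0:ℝ) ∈ Icc (0:ℝ) T := ⟨le_refl _, hT.le⟩
  have hTT : T ∈ Icc (0:ℝ) T := ⟨hT.le, le_refl _⟩
  have hinit := traj_init hT htraj
  have hFc : Continuous (fun s => ξ (cl T s) 1 + ξ (cl T s) 2) :=
    (traj_cont hT htraj 1).add (traj_cont hT htraj 2)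
  have hF0 : ξ (cl T 0) 1 + ξ (cl T 0) 2 = ξ0 1 + ξ0 2 := by
    rw [cl_eq h0T, hinit.1, hinit.2]
  -- integrability of D's integrand on [0,T]
  obtain ⟨C, hC⟩ := (isCompact_Icc (a := (0:ℝ)) (b := T)).exists_bound_of_continuousOn
    ((htraj.1 1).add (htraj.1 2))
  have hDint : IntervalIntegrable
      (fun s => ((1 - (α s 1 + α s 2))/2) * (ξ (cl T s) 1 + ξ (cl T s) 2)) volume 0 T := by
    refine II_aux (((measurable_const.sub ((hadm.1 1).add (hadm.1 2))).div_const 2).mul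
      hFc.measurable) hT.le (C := |C|) ?_
    intro s hs
    have hsm : s ∈ Icc (0:ℝ) T := ⟨hs.1.le, hs.2⟩
    have hb1 := hadm.2.1 s hsm 1 mem12.1
    have hb2 := hadm.2.1 s hsm 2 mem12.2
    have hbs := hadm.2.2 s hsm
    have h1 : |(1 - (α s 1 + α s 2))/2| ≤ 1 := by
      rw [abs_le]; constructor <;> [linarith [hbs]; linarith [hb1.1, hb2.1]]
    have h2 : |ξ (cl T s) 1 + ξ (cl T s) 2| ≤ |C| := by
      rw [cl_eq hsm]; exact le_trans (hC s hsm) (le_abs_self C)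
    calc |((1 - (α s 1 + α s 2))/2) * (ξ (cl T s) 1 + ξ (cl T s) 2)|
        = |(1 - (α s 1 + α s 2))/2| * |ξ (cl T s) 1 + ξ (cl T s) 2| := abs_mul _ _
      _ ≤ 1 * |C| := mul_le_mul h1 h2 (abs_nonneg _) zero_le_one
      _ = |C| := one_mul _
  -- the sum identity
  have hid : ∀ t ∈ Icc (0:ℝ) T,
      (ξ (cl T t) 1 + ξ (cl T t) 2) - (ξ (cl T 0) 1 + ξ (cl T 0) 2)
        + (1/2) * (∫ s in (0:ℝ)..t, (ξ (cl T s) 1 + ξ (cl T s) 2))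
      = ∫ s in (0:ℝ)..t, ((1 - (α s 1 + α s 2))/2) * (ξ (cl T s) 1 + ξ (cl T s) 2) := by
    intro t ht
    have h1 := traj_id hT hadm htraj 1 mem12.1 t ht
    have h2 := traj_id hT hadm htraj 2 mem12.2 t ht
    have hiQ1 : IntervalIntegrable
        (fun s => (1 - α s 1) * ((ξ (cl T s) 1 + ξ (cl T s) 2)/2)) volume 0 t :=
      (force_int hT hadm htraj 1 mem12.1).mono_set
        (by rw [uIcc_of_le ht.1, uIcc_of_le (ht.1.trans ht.2)]; exact Icc_subset_Icc le_rfl ht.2)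
    have hiQ2 : IntervalIntegrable
        (fun s => (1 - α s 2) * ((ξ (cl T s) 1 + ξ (cl T s) 2)/2)) volume 0 t :=
      (force_int hT hadm htraj 2 mem12.2).mono_set
        (by rw [uIcc_of_le ht.1, uIcc_of_le (ht.1.trans ht.2)]; exact Icc_subset_Icc le_rfl ht.2)
    have hiF : IntervalIntegrable
        (fun s => (1/2 : ℝ) * (ξ (cl T s) 1 + ξ (cl T s) 2)) volume 0 t :=
      Continuous.intervalIntegrable (by fun_prop) 0 t
    have hsplit : (∫ s in (0:ℝ)..t, ((1 - (α s 1 + α s 2))/2) * (ξ (cl T s) 1 + ξ (cl T s) 2))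
        = (∫ s in (0:ℝ)..t, (1 - α s 1) * ((ξ (cl T s) 1 + ξ (cl T s) 2)/2))
          + ((∫ s in (0:ℝ)..t, (1 - α s 2) * ((ξ (cl T s) 1 + ξ (cl T s) 2)/2))
            - (∫ s in (0:ℝ)..t, (1/2 : ℝ) * (ξ (cl T s) 1 + ξ (cl T s) 2))) := by
      rw [← intervalIntegral.integral_sub hiQ2 hiF, ← intervalIntegral.integral_add hiQ1 (hiQ2.sub hiF)]
      congr 1; funext s; ring
    have hadd : (∫ s in (0:ℝ)..t, (ξ (cl T s) 1 + ξ (cl T s) 2))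
        = (∫ s in (0:ℝ)..t, ξ (cl T s) 1) + (∫ s in (0:ℝ)..t, ξ (cl T s) 2) :=
      intervalIntegral.integral_add ((traj_cont hT htraj 1).intervalIntegrable 0 t)
        ((traj_cont hT htraj 2).intervalIntegrable 0 t)
    have hhalf : (∫ s in (0:ℝ)..t, (1/2 : ℝ) * (ξ (cl T s) 1 + ξ (cl T s) 2))
        = (1/2) * ∫ s in (0:ℝ)..t, (ξ (cl T s) 1 + ξ (cl T s) 2) :=
      intervalIntegral.integral_const_mul _ _
    rw [cl_eq ht, hF0, hsplit, hadd, hhalf, hadd]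
    linarith [h1, h2]
  -- monotonicity of D on [0,τ] when F ≥ 0 there
  have hDmono : ∀ τ ∈ Icc (0:ℝ) T, (∀ s ∈ Icc (0:ℝ) τ, 0 ≤ ξ (cl T s) 1 + ξ (cl T s) 2) →
      MonotoneOn (fun t => ∫ s in (0:ℝ)..t,
        ((1 - (α s 1 + α s 2))/2) * (ξ (cl T s) 1 + ξ (cl T s) 2)) (Icc 0 τ) := by
    intro τ hτ hFpos x hx y hy hxy
    have hix : IntervalIntegrable
        (fun s => ((1 - (α s 1 + α s 2))/2) * (ξ (cl T s) 1 + ξ (cl T s) 2)) volume 0 x :=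
      hDint.mono_set (by
        rw [uIcc_of_le hx.1, uIcc_of_le hT.le]
        exact Icc_subset_Icc le_rfl (hx.2.trans hτ.2))
    have hixy : IntervalIntegrable
        (fun s => ((1 - (α s 1 + α s 2))/2) * (ξ (cl T s) 1 + ξ (cl T s) 2)) volume x y :=
      hDint.mono_set (by
        rw [uIcc_of_le hxy, uIcc_of_le hT.le]
        exact Icc_subset_Icc hx.1 (hy.2.trans hτ.2))
    have hsum := intervalIntegral.integral_add_adjacent_intervals hix hixy
    simp only
    rw [← hsum]
    have hnn : 0 ≤ ∫ s in x..y,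
        ((1 - (α s 1 + α s 2))/2) * (ξ (cl T s) 1 + ξ (cl T s) 2) := by
      apply intervalIntegral.integral_nonneg hxy
      intro s hs
      have hsτ : s ∈ Icc (0:ℝ) τ := ⟨hx.1.trans hs.1, hs.2.trans hy.2⟩
      have hsm : s ∈ Icc (0:ℝ) T := ⟨hsτ.1, hsτ.2.trans hτ.2⟩
      have hbs := hadm.2.2 s hsm
      exact mul_nonneg (by linarith) (hFpos s hsτ)
    linarith
  -- positivity of F on [0,T]
  have hpos : ∀ t ∈ Icc (0:ℝ) T, 0 < ξ (cl T t) 1 + ξ (cl T t) 2 := by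
    by_contra hcon
    push_neg at hcon
    obtain ⟨t1, ht1, ht1le⟩ := hcon
    -- find a zero of F
    have hzero : ∃ c ∈ Icc (0:ℝ) t1, ξ (cl T c) 1 + ξ (cl T c) 2 = 0 := by
      have := intermediate_value_Icc' ht1.1 (hFc.continuousOn (s := Icc 0 t1))
      have hmem : (0:ℝ) ∈ Icc (ξ (cl T t1) 1 + ξ (cl T t1) 2) (ξ (cl T 0) 1 + ξ (cl T 0) 2) :=
        ⟨ht1le, by rw [hF0]; exact hb.le⟩
      obtain ⟨c, hc, hc0⟩ := this hmem
      exact ⟨c, hc, hc0⟩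
    obtain ⟨c, hc, hc0⟩ := hzero
    set K := {t : ℝ | t ∈ Icc (0:ℝ) T ∧ ξ (cl T t) 1 + ξ (cl T t) 2 = 0} with hK
    have hKne : K.Nonempty := ⟨c, ⟨⟨hc.1, hc.2.trans ht1.2⟩, hc0⟩⟩
    have hKcl : IsClosed K := by
      have : K = Icc (0:ℝ) T ∩ (fun s => ξ (cl T s) 1 + ξ (cl T s) 2) ⁻¹' {0} := by
        ext x; exact Iff.rfl
      rw [this]
      exact isClosed_Icc.inter (isClosed_singleton.preimage hFc)
    have hKbdd : BddBelow K := ⟨0, fun x hx => hx.1.1⟩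
    set τ := sInf K with hτdef
    have hτK : τ ∈ K := hKcl.csInf_mem hKne hKbdd
    have hτI : τ ∈ Icc (0:ℝ) T := hτK.1
    have hτ0 : ξ (cl T τ) 1 + ξ (cl T τ) 2 = 0 := hτK.2
    -- F > 0 strictly before τ
    have hbefore : ∀ s ∈ Icc (0:ℝ) T, s < τ → 0 < ξ (cl T s) 1 + ξ (cl T s) 2 := by
      intro s hsm hsτ
      by_contra hns
      push_neg at hns
      rcases lt_or_eq_of_le hns with hlt | heq
      · have : ∃ c' ∈ Icc (0:ℝ) s, ξ (cl T c') 1 + ξ (cl T c') 2 = 0 := by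
          have := intermediate_value_Icc' hsm.1 (hFc.continuousOn (s := Icc 0 s))
          have hmem : (0:ℝ) ∈ Icc (ξ (cl T s) 1 + ξ (cl T s) 2) (ξ (cl T 0) 1 + ξ (cl T 0) 2) :=
            ⟨hlt.le, by rw [hF0]; exact hb.le⟩
          obtain ⟨c', hc', hc'0⟩ := this hmem
          exact ⟨c', hc', hc'0⟩
        obtain ⟨c', hc', hc'0⟩ := this
        have : τ ≤ c' := csInf_le hKbdd ⟨⟨hc'.1, hc'.2.trans hsm.2⟩, hc'0⟩
        linarith [hc'.2]
      · have : τ ≤ s := csInf_le hKbdd ⟨hsm, heq⟩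
        linarith
    -- F ≥ 0 on [0,τ]
    have hFnn : ∀ s ∈ Icc (0:ℝ) τ, 0 ≤ ξ (cl T s) 1 + ξ (cl T s) 2 := by
      intro s hs
      rcases lt_or_eq_of_le hs.2 with h | h
      · exact (hbefore s ⟨hs.1, hs.2.trans hτI.2⟩ h).le
      · rw [h, hτ0]
    have hmono := hDmono τ hτI hFnn
    have hvl := volterra_lower (1/2) (by norm_num)
      (fun s => ξ (cl T s) 1 + ξ (cl T s) 2) _ hFc τ
      (fun t ht => hid t ⟨ht.1, ht.2.trans hτI.2⟩) hmono τ ⟨hτI.1, le_refl _⟩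
    have hD0' : (∫ s in (0:ℝ)..(0:ℝ),
        ((1 - (α s 1 + α s 2))/2) * (ξ (cl T s) 1 + ξ (cl T s) 2)) = 0 :=
      intervalIntegral.integral_same
    have hDτnn : 0 ≤ ∫ s in (0:ℝ)..τ,
        ((1 - (α s 1 + α s 2))/2) * (ξ (cl T s) 1 + ξ (cl T s) 2) := by
      have := hmono (Set.left_mem_Icc.mpr hτI.1) ⟨hτI.1, le_refl _⟩ hτI.1
      simpa [hD0'] using this
    rw [hτ0, hF0] at hvl
    nlinarith [Real.exp_pos (-(1/2 * τ)), hvl, hDτnn, hb]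
  have hFnnT : ∀ s ∈ Icc (0:ℝ) T, 0 ≤ ξ (cl T s) 1 + ξ (cl T s) 2 := fun s hs => (hpos s hs).le
  have hmonoT := hDmono T hTT hFnnT
  have hvl := volterra_lower (1/2) (by norm_num)
    (fun s => ξ (cl T s) 1 + ξ (cl T s) 2)
    (fun t => ∫ s in (0:ℝ)..t, ((1 - (α s 1 + α s 2))/2) * (ξ (cl T s) 1 + ξ (cl T s) 2))
    hFc T hid hmonoT
  have hD00 : (∫ s in (0:ℝ)..(0:ℝ),
      ((1 - (α s 1 + α s 2))/2) * (ξ (cl T s) 1 + ξ (cl T s) 2)) = 0 :=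
    intervalIntegral.integral_same
  have hDnn : ∀ t ∈ Icc (0:ℝ) T, 0 ≤ ∫ s in (0:ℝ)..t,
      ((1 - (α s 1 + α s 2))/2) * (ξ (cl T s) 1 + ξ (cl T s) 2) := by
    intro t ht
    have := hmonoT (Set.left_mem_Icc.mpr hT.le) ht ht.1
    simpa [hD00] using this
  -- clause 1
  have hclause1 : ∀ t ∈ Icc (0:ℝ) T,
      (ξ0 1 + ξ0 2) * Real.exp (-(1/2 * t)) ≤ ξ t 1 + ξ t 2 := by
    intro t ht
    have h := hvl t ht
    rw [hF0, cl_eq ht] at h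
    nlinarith [Real.exp_pos (-(1/2 * t)), hDnn t ht, h]
  refine ⟨hclause1, ?_, ?_⟩
  · -- clause 2 : lower bound on ξ T 1
    have hid1 : ∀ t ∈ Icc (0:ℝ) T,
        ξ (cl T t) 1 - ξ (cl T 0) 1 + 1 * (∫ s in (0:ℝ)..t, ξ (cl T s) 1)
        = ∫ s in (0:ℝ)..t, (1 - α s 1) * ((ξ (cl T s) 1 + ξ (cl T s) 2)/2) := by
      intro t ht
      have h1 := traj_id hT hadm htraj 1 mem12.1 t ht
      rw [cl_eq ht, cl_eq h0T, hinit.1]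
      linarith [h1]
    have hmono1 : MonotoneOn (fun t => ∫ s in (0:ℝ)..t,
        (1 - α s 1) * ((ξ (cl T s) 1 + ξ (cl T s) 2)/2)) (Icc 0 T) := by
      intro x hx y hy hxy
      have hix := (force_int hT hadm htraj 1 mem12.1).mono_set
        (by rw [uIcc_of_le hx.1, uIcc_of_le hT.le]; exact Icc_subset_Icc le_rfl hx.2)
      have hixy := (force_int hT hadm htraj 1 mem12.1).mono_set
        (by rw [uIcc_of_le hxy, uIcc_of_le hT.le]; exact Icc_subset_Icc hx.1 hy.2)
      have hsum := intervalIntegral.integral_add_adjacent_intervals hix hixy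
      simp only
      rw [← hsum]
      have hnn : 0 ≤ ∫ s in x..y, (1 - α s 1) * ((ξ (cl T s) 1 + ξ (cl T s) 2)/2) := by
        apply intervalIntegral.integral_nonneg hxy
        intro s hs
        have hsm : s ∈ Icc (0:ℝ) T := ⟨hx.1.trans hs.1, hs.2.trans hy.2⟩
        have hb1 := hadm.2.1 s hsm 1 mem12.1
        exact mul_nonneg (by linarith [hb1.2]) (by linarith [hpos s hsm])
      linarith
    have hvl1 := volterra_lower 1 one_pos (fun s => ξ (cl T s) 1)
      (fun t => ∫ s in (0:ℝ)..t, (1 - α s 1) * ((ξ (cl T s) 1 + ξ (cl T s) 2)/2))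
      (traj_cont hT htraj 1) T hid1 hmono1 T hTT
    have hD10 : (∫ s in (0:ℝ)..(0:ℝ), (1 - α s 1) * ((ξ (cl T s) 1 + ξ (cl T s) 2)/2)) = 0 :=
      intervalIntegral.integral_same
    have hD1nn : 0 ≤ ∫ s in (0:ℝ)..T, (1 - α s 1) * ((ξ (cl T s) 1 + ξ (cl T s) 2)/2) := by
      have := hmono1 (Set.left_mem_Icc.mpr hT.le) hTT hT.le
      simpa [hD10] using this
    rw [cl_eq hTT, cl_eq h0T, hinit.1] at hvl1
    nlinarith [Real.exp_pos (-(1 * T)), hvl1, hD1nn]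
  · -- clause 3
    intro hcase
    have hDT : (∫ s in (0:ℝ)..T,
        ((1 - (α s 1 + α s 2))/2) * (ξ (cl T s) 1 + ξ (cl T s) 2)) = 0 := by
      rcases hcase with heq | hu1
      · have h := hvl T hTT
        rw [hF0, cl_eq hTT, heq] at h
        have hDnnT := hDnn T hTT
        nlinarith [Real.exp_pos (-(1/2 * T)), h, hDnnT]
      · have heqon : EqOn (fun s => ((1 - (α s 1 + α s 2))/2) * (ξ (cl T s) 1 + ξ (cl T s) 2))
            (fun _ => (0:ℝ)) (uIcc 0 T) := by
          intro x hx
          rw [uIcc_of_le hT.le] at hx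
          simp only [hu1 x hx]
          ring
        rw [intervalIntegral.integral_congr heqon, intervalIntegral.integral_zero]
    have hDzero : ∀ t ∈ Icc (0:ℝ) T, (∫ s in (0:ℝ)..t,
        ((1 - (α s 1 + α s 2))/2) * (ξ (cl T s) 1 + ξ (cl T s) 2)) = 0 := by
      intro t ht
      have hge := hDnn t ht
      have hle : (∫ s in (0:ℝ)..t,
          ((1 - (α s 1 + α s 2))/2) * (ξ (cl T s) 1 + ξ (cl T s) 2)) ≤ 0 := by
        have := hmonoT ht hTT ht.2
        simp only at this
        rw [hDT] at this
        exact this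
      linarith
    constructor
    · -- a.e. statement
      have hIoc : ∫ s in Ioc (0:ℝ) T,
          ((1 - (α s 1 + α s 2))/2) * (ξ (cl T s) 1 + ξ (cl T s) 2) = 0 := by
        rw [← intervalIntegral.integral_of_le hT.le]
        exact hDT
      have hnnae : 0 ≤ᵐ[volume.restrict (Ioc (0:ℝ) T)]
          (fun s => ((1 - (α s 1 + α s 2))/2) * (ξ (cl T s) 1 + ξ (cl T s) 2)) := by
        refine (ae_restrict_iff' measurableSet_Ioc).2 (Filter.Eventually.of_forall ?_)
        intro s hs
        have hsm : s ∈ Icc (0:ℝ) T := ⟨hs.1.le, hs.2⟩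
        have hbs := hadm.2.2 s hsm
        exact mul_nonneg (by linarith) (hpos s hsm).le
      have hint : IntegrableOn
          (fun s => ((1 - (α s 1 + α s 2))/2) * (ξ (cl T s) 1 + ξ (cl T s) 2))
          (Ioc (0:ℝ) T) volume :=
        (intervalIntegrable_iff_integrableOn_Ioc_of_le hT.le).mp hDint
      have hae0 := (setIntegral_eq_zero_iff_of_nonneg_ae hnnae hint).mp hIoc
      have hae0' := (ae_restrict_iff' measurableSet_Ioc).mp hae0
      have hne0 : ∀ᵐ (t : ℝ), t ≠ 0 := by
        refine (MeasureTheory.ae_iff).mpr ?_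
        have : {a : ℝ | ¬ a ≠ 0} = {0} := by ext x; simp
        rw [this]
        exact Real.volume_singleton
      filter_upwards [hae0', hne0] with t h1 h2 ht
      have htIoc : t ∈ Ioc (0:ℝ) T := ⟨lt_of_le_of_ne ht.1 (Ne.symm h2), ht.2⟩
      have h3 := h1 htIoc
      have hFt : ξ (cl T t) 1 + ξ (cl T t) 2 ≠ 0 := (hpos t ht).ne'
      have := mul_eq_zero.mp h3
      rcases this with h4 | h4
      · have : 1 - (α t 1 + α t 2) = 0 := by linarith [h4]
        linarith
      · exact absurd h4 hFt
    · -- exact formula for the sum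
      have heq := volterra_eq (1/2) (by norm_num)
        (fun s => ξ (cl T s) 1 + ξ (cl T s) 2) hFc T
        (fun t ht => by rw [hid t ht]; exact hDzero t ht)
      intro t ht
      have h := heq t ht
      rw [cl_eq ht, hF0] at h
      exact h

end traj2

lemma hd_exp_neg (c : ℝ) (x : ℝ) :
    HasDerivAt (fun s : ℝ => c * Real.exp (-s)) (-(c * Real.exp (-x))) x := by
  have h1 : HasDerivAt (fun s : ℝ => -s) (-1) x := by
    exact (hasDerivAt_id x).neg
  have := (h1.exp).const_mul c
  refine this.congr_deriv ?_
  ring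

lemma hd_exp_half (c : ℝ) (x : ℝ) :
    HasDerivAt (fun s : ℝ => c * Real.exp (-(s/2))) (-(c/2 * Real.exp (-(x/2)))) x := by
  have h1 : HasDerivAt (fun s : ℝ => -(s/2)) (-(1/2)) x := by
    exact ((hasDerivAt_id x).div_const 2).neg
  have := (h1.exp).const_mul c
  refine this.congr_deriv ?_
  ring

lemma int_exp_neg (c x y : ℝ) : ∫ s in x..y, -(c * Real.exp (-s))
    = c * Real.exp (-y) - c * Real.exp (-x) := by
  have := intervalIntegral.integral_eq_sub_of_hasDerivAt
    (f := fun s : ℝ => c * Real.exp (-s)) (f' := fun s : ℝ => -(c * Real.exp (-s)))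
    (fun s _ => hd_exp_neg c s) (Continuous.intervalIntegrable (by fun_prop) x y)
  rw [this]

lemma int_exp_half (c x y : ℝ) : ∫ s in x..y, -(c/2 * Real.exp (-(s/2)))
    = c * Real.exp (-(y/2)) - c * Real.exp (-(x/2)) := by
  have := intervalIntegral.integral_eq_sub_of_hasDerivAt
    (f := fun s : ℝ => c * Real.exp (-(s/2))) (f' := fun s : ℝ => -(c/2 * Real.exp (-(s/2))))
    (fun s _ => hd_exp_half c s) (Continuous.intervalIntegrable (by fun_prop) x y)
  rw [this]

lemma int_mix (a b x y : ℝ) : ∫ s in x..y, (a * Real.exp (-s) - b * Real.exp (-(s/2)))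
    = (-(a*Real.exp (-y)) + 2*b*Real.exp (-(y/2))) - (-(a*Real.exp (-x)) + 2*b*Real.exp (-(x/2))) := by
  have hd : ∀ s : ℝ, HasDerivAt (fun s : ℝ => -(a*Real.exp (-s)) + 2*b*Real.exp (-(s/2)))
      (a * Real.exp (-s) - b * Real.exp (-(s/2))) s := by
    intro s
    have h1 := (hd_exp_neg a s).neg
    have h2 := hd_exp_half (2*b) s
    have := h1.add h2
    refine this.congr_deriv ?_
    ring
  have := intervalIntegral.integral_eq_sub_of_hasDerivAt
    (fun s _ => hd s) (Continuous.intervalIntegrable (by fun_prop) x y)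
  rw [this]

lemma cont_piece {t₀ : ℝ} {f g : ℝ → ℝ} (hf : Continuous f) (hg : Continuous g)
    (h : f t₀ = g t₀) : Continuous (fun t => if t < t₀ then f t else g t) := by
  have heq : (fun t => if t < t₀ then f t else g t) = (fun t => if t₀ ≤ t then g t else f t) := by
    funext t
    rcases lt_or_ge t t₀ with h1 | h1
    · rw [if_pos h1, if_neg (not_le.mpr h1)]
    · rw [if_neg (not_lt.mpr h1), if_pos h1]
  rw [heq]
  exact Continuous.if_le hg hf continuous_const continuous_id
    (fun x hx => by rw [← hx]; exact h.symm)

/-- the explicit optimal trajectory -/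
def eta0 (a b t₀ : ℝ) : ℝ → ℕ → ℝ := fun t i =>
  if i = 1 then (if t < t₀ then a * Real.exp (-t) else b * Real.exp (-(t/2)))
  else if i = 2 then (if t < t₀ then 2*b*Real.exp (-(t/2)) - a * Real.exp (-t)
    else b * Real.exp (-(t/2))) else 0

lemma eta0_sum (a b t₀ : ℝ) (s : ℝ) :
    eta0 a b t₀ s 1 + eta0 a b t₀ s 2 = 2*b*Real.exp (-(s/2)) := by
  by_cases hs : s < t₀ <;> norm_num [eta0, hs] <;> ring

lemma eta0_cont (a b t₀ : ℝ) (hmatch : a * Real.exp (-t₀) = b * Real.exp (-(t₀/2))) (i : ℕ) :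
    Continuous (fun t => eta0 a b t₀ t i) := by
  by_cases h1 : i = 1
  · simp only [eta0, h1, if_true]
    exact cont_piece (by fun_prop) (by fun_prop) hmatch
  · by_cases h2 : i = 2
    · simp only [eta0, h1, h2, if_false, if_true]
      exact cont_piece (by fun_prop) (by fun_prop) (by linarith [hmatch])
    · simp only [eta0, h1, h2, if_false]
      exact continuous_const

lemma ae_ne_vol (c : ℝ) : ∀ᵐ s : ℝ, s ≠ c := by
  refine (MeasureTheory.ae_iff).mpr ?_
  have : {a : ℝ | ¬ a ≠ c} = {c} := by ext x; simp
  rw [this]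
  exact Real.volume_singleton

lemma eta0_traj (T a b t₀ : ℝ) (hT : 0 < T) (ht₀ : 0 < t₀) (ha : 0 < a) (hb : 0 < b)
    (hmatch : a * Real.exp (-t₀) = b * Real.exp (-(t₀/2)))
    (ξ0 : ℕ → ℝ) (h1 : ξ0 1 = a) (h2 : ξ0 2 = 2*b - a)
    (β : ℝ → ℕ → ℝ)
    (hβ : ∀ t i, β t i = if i = 1 then (if t < t₀ then (1:ℝ) else 1/2)
      else if i = 2 then (if t < t₀ then (0:ℝ) else 1/2) else 0) :
    IsTrajectory2 T β ξ0 (eta0 a b t₀) := by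
  constructor
  · exact fun i => (eta0_cont a b t₀ hmatch i).continuousOn
  · intro t ht i hi
    have hxbar : ∀ s, xbar2 (eta0 a b t₀) s = b * Real.exp (-(s/2)) := by
      intro s; unfold xbar2; rw [eta0_sum]; ring
    have hexp1 : ∀ s : ℝ, 0 ≤ s → Real.exp (-s) ≤ 1 := fun s hs =>
      Real.exp_le_one_iff.mpr (by linarith)
    have hexp2 : ∀ s : ℝ, 0 ≤ s → Real.exp (-(s/2)) ≤ 1 := fun s hs =>
      Real.exp_le_one_iff.mpr (by linarith)
    have hfin : i = 1 ∨ i = 2 := by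
      rcases Finset.mem_Icc.mp hi with ⟨hl, hr⟩
      interval_cases i
      · left; rfl
      · right; rfl
    rcases hfin with hi1 | hi2
    · subst hi1
      have hI : (fun s => -(eta0 a b t₀ s 1) + (1 - β s 1) * xbar2 (eta0 a b t₀) s)
          = fun s => if s < t₀ then -(a * Real.exp (-s)) else -(b/2 * Real.exp (-(s/2))) := by
        funext s
        rw [hxbar, hβ]
        by_cases hs : s < t₀ <;> norm_num [eta0, hs] <;> ring
      rw [hI]
      have hPi : IntervalIntegrable
          (fun s => if s < t₀ then -(a * Real.exp (-s)) else -(b/2 * Real.exp (-(s/2))))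
          volume 0 t := by
        refine II_aux (Measurable.ite measurableSet_Iio (by fun_prop) (by fun_prop))
          ht.1 (C := a + b) ?_
        intro s hs
        by_cases h : s < t₀
        · rw [if_pos h, abs_neg, abs_of_nonneg (by positivity)]
          nlinarith [hexp1 s hs.1.le]
        · rw [if_neg h, abs_neg, abs_of_nonneg (by positivity)]
          nlinarith [hexp2 s hs.1.le]
      by_cases htlt : t < t₀
      · have hcong : (∫ s in (0:ℝ)..t,
            (if s < t₀ then -(a * Real.exp (-s)) else -(b/2 * Real.exp (-(s/2)))))
            = ∫ s in (0:ℝ)..t, -(a * Real.exp (-s)) := by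
          apply intervalIntegral.integral_congr
          intro s hs
          rw [uIcc_of_le ht.1] at hs
          exact if_pos (lt_of_le_of_lt hs.2 htlt)
        rw [hcong, int_exp_neg]
        show (if t < t₀ then a * Real.exp (-t) else _) = _
        rw [if_pos htlt, h1]
        norm_num
      · have htle : t₀ ≤ t := not_lt.mp htlt
        have hP1a := hPi.mono_set (by
          rw [uIcc_of_le ht₀.le, uIcc_of_le ht.1]
          exact Icc_subset_Icc le_rfl htle)
        have hP1b := hPi.mono_set (by
          rw [uIcc_of_le htle, uIcc_of_le ht.1]
          exact Icc_subset_Icc ht₀.le le_rfl)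
        rw [← intervalIntegral.integral_add_adjacent_intervals hP1a hP1b]
        have hp1 : (∫ s in (0:ℝ)..t₀,
            (if s < t₀ then -(a * Real.exp (-s)) else -(b/2 * Real.exp (-(s/2)))))
            = ∫ s in (0:ℝ)..t₀, -(a * Real.exp (-s)) := by
          apply intervalIntegral.integral_congr_ae
          filter_upwards [ae_ne_vol t₀] with s hs hsm
          rw [uIoc_of_le ht₀.le] at hsm
          rw [if_pos (lt_of_le_of_ne hsm.2 hs)]
        have hp2 : (∫ s in t₀..t,
            (if s < t₀ then -(a * Real.exp (-s)) else -(b/2 * Real.exp (-(s/2)))))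
            = ∫ s in t₀..t, -(b/2 * Real.exp (-(s/2))) := by
          apply intervalIntegral.integral_congr
          intro s hs
          rw [uIcc_of_le htle] at hs
          exact if_neg (not_lt.mpr hs.1)
        rw [hp1, hp2, int_exp_neg, int_exp_half]
        show (if t < t₀ then a * Real.exp (-t) else b * Real.exp (-(t/2))) = _
        rw [if_neg htlt, h1]
        norm_num
        linarith [hmatch]
    · subst hi2
      have hI : (fun s => -(eta0 a b t₀ s 2) + (1 - β s 2) * xbar2 (eta0 a b t₀) s)
          = fun s => if s < t₀ then (a * Real.exp (-s) - b * Real.exp (-(s/2)))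
            else -(b/2 * Real.exp (-(s/2))) := by
        funext s
        rw [hxbar, hβ]
        by_cases hs : s < t₀ <;> norm_num [eta0, hs] <;> ring
      rw [hI]
      have hPi : IntervalIntegrable
          (fun s => if s < t₀ then (a * Real.exp (-s) - b * Real.exp (-(s/2)))
            else -(b/2 * Real.exp (-(s/2)))) volume 0 t := by
        refine II_aux (Measurable.ite measurableSet_Iio (by fun_prop) (by fun_prop))
          ht.1 (C := a + b) ?_
        intro s hs
        by_cases h : s < t₀
        · rw [if_pos h, abs_sub_comm]
          rw [abs_sub_le_iff]  -- maybe easier: abs_le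
          constructor <;> nlinarith [hexp1 s hs.1.le, hexp2 s hs.1.le,
              Real.exp_pos (-s), Real.exp_pos (-(s/2))]
        · rw [if_neg h, abs_neg, abs_of_nonneg (by positivity)]
          nlinarith [hexp2 s hs.1.le]
      by_cases htlt : t < t₀
      · have hcong : (∫ s in (0:ℝ)..t,
            (if s < t₀ then (a * Real.exp (-s) - b * Real.exp (-(s/2)))
              else -(b/2 * Real.exp (-(s/2)))))
            = ∫ s in (0:ℝ)..t, (a * Real.exp (-s) - b * Real.exp (-(s/2))) := by
          apply intervalIntegral.integral_congr
          intro s hs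
          rw [uIcc_of_le ht.1] at hs
          exact if_pos (lt_of_le_of_lt hs.2 htlt)
        rw [hcong, int_mix]
        show (if t < t₀ then 2*b*Real.exp (-(t/2)) - a * Real.exp (-t) else _) = _
        rw [if_pos htlt, h2]
        norm_num
        ring
      · have htle : t₀ ≤ t := not_lt.mp htlt
        have hP1a := hPi.mono_set (by
          rw [uIcc_of_le ht₀.le, uIcc_of_le ht.1]
          exact Icc_subset_Icc le_rfl htle)
        have hP1b := hPi.mono_set (by
          rw [uIcc_of_le htle, uIcc_of_le ht.1]
          exact Icc_subset_Icc ht₀.le le_rfl)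
        rw [← intervalIntegral.integral_add_adjacent_intervals hP1a hP1b]
        have hp1 : (∫ s in (0:ℝ)..t₀,
            (if s < t₀ then (a * Real.exp (-s) - b * Real.exp (-(s/2)))
              else -(b/2 * Real.exp (-(s/2)))))
            = ∫ s in (0:ℝ)..t₀, (a * Real.exp (-s) - b * Real.exp (-(s/2))) := by
          apply intervalIntegral.integral_congr_ae
          filter_upwards [ae_ne_vol t₀] with s hs hsm
          rw [uIoc_of_le ht₀.le] at hsm
          rw [if_pos (lt_of_le_of_ne hsm.2 hs)]
        have hp2 : (∫ s in t₀..t,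
            (if s < t₀ then (a * Real.exp (-s) - b * Real.exp (-(s/2)))
              else -(b/2 * Real.exp (-(s/2)))))
            = ∫ s in t₀..t, -(b/2 * Real.exp (-(s/2))) := by
          apply intervalIntegral.integral_congr
          intro s hs
          rw [uIcc_of_le htle] at hs
          exact if_neg (not_lt.mpr hs.1)
        rw [hp1, hp2, int_mix, int_exp_half]
        show (if t < t₀ then 2*b*Real.exp (-(t/2)) - a * Real.exp (-t)
          else b * Real.exp (-(t/2))) = _
        rw [if_neg htlt, h2]
        norm_num
        linarith [hmatch]

set_option maxHeartbeats 1000000 in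
/-- Two agents, `M = 1`, `ξ⁰_1 > ξ⁰_2`, `ξ̄(0) > 0`, `t₀ = 2 ln(ξ⁰_1/ξ̄(0))`.  For an optimal
control: `T ≥ t₀ ↔ ξ_1(T) = ξ_2(T)`; if `T ≥ t₀` then full strength is used a.e. (so that
`ξ̄(t) = ξ̄(0) e^{−t/2}`), and the control `(1,0)` on `[0,t₀)`, `(1/2,1/2)` on `[t₀,T]`
is optimal. -/
theorem two_agents_M_eq_one_final_cost
    (T : ℝ) (hT : 0 < T) (ξ0 : ℕ → ℝ) (hord : ξ0 2 < ξ0 1)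
    (hbar : 0 < (ξ0 1 + ξ0 2) / 2)
    (t₀ : ℝ) (ht₀ : t₀ = 2 * Real.log (ξ0 1 / ((ξ0 1 + ξ0 2) / 2)))
    (α ξ : ℝ → ℕ → ℝ) (hopt : IsOptimalFinal2 T 1 ξ0 α ξ)
    (β : ℝ → ℕ → ℝ)
    (hβ : ∀ t i, β t i =
      if i = 1 then (if t < t₀ then (1 : ℝ) else 1 / 2)
      else if i = 2 then (if t < t₀ then (0 : ℝ) else 1 / 2) else 0) :
    (t₀ ≤ T ↔ ξ T 1 = ξ T 2) ∧
    (t₀ ≤ T →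
      (∀ᵐ t ∂volume, t ∈ Set.Icc (0 : ℝ) T → α t 1 + α t 2 = 1) ∧
      (∀ t ∈ Set.Icc (0 : ℝ) T, xbar2 ξ t = ((ξ0 1 + ξ0 2) / 2) * Real.exp (-t / 2)) ∧
      (∀ η, IsTrajectory2 T β ξ0 η → IsOptimalFinal2 T 1 ξ0 β η)) := by
  obtain ⟨hadm, htraj, hmin⟩ := hopt
  have hb2 : 0 < ξ0 1 + ξ0 2 := by linarith
  have ha : 0 < ξ0 1 := by linarith
  have hba : (ξ0 1 + ξ0 2)/2 < ξ0 1 := by linarith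
  have ht0half : -(t₀/2) = -Real.log (ξ0 1 / ((ξ0 1 + ξ0 2)/2)) := by rw [ht₀]; ring
  have hexp_t0 : Real.exp (-(t₀/2)) = ((ξ0 1 + ξ0 2)/2) / ξ0 1 := by
    rw [ht0half, Real.exp_neg, Real.exp_log (by positivity), inv_div]
  have ht0pos : 0 < t₀ := by
    have h1 : 1 < ξ0 1 / ((ξ0 1 + ξ0 2)/2) := (one_lt_div hbar).mpr hba
    rw [ht₀]
    have := Real.log_pos h1
    linarith
  have hmatch : ξ0 1 * Real.exp (-t₀) = ((ξ0 1 + ξ0 2)/2) * Real.exp (-(t₀/2)) := by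
    have hsq : Real.exp (-t₀) = Real.exp (-(t₀/2)) * Real.exp (-(t₀/2)) := by
      rw [← Real.exp_add]; ring_nf
    rw [hsq, hexp_t0]
    field_simp
  have hβadm : IsAdmissible2 T 1 β := by
    refine ⟨?_, ?_, ?_⟩
    · intro i
      by_cases h1 : i = 1
      · subst h1
        have hfe : (fun t => β t 1) = (fun t => if t < t₀ then (1:ℝ) else 1/2) :=
          funext (fun t => by rw [hβ]; norm_num)
        rw [hfe]
        exact Measurable.ite measurableSet_Iio measurable_const measurable_const
      · by_cases h2 : i = 2
        · subst h2
          have hfe : (fun t => β t 2) = (fun t => if t < t₀ then (0:ℝ) else 1/2) :=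
            funext (fun t => by rw [hβ]; norm_num)
          rw [hfe]
          exact Measurable.ite measurableSet_Iio measurable_const measurable_const
        · have hfe : (fun t => β t i) = (fun _ => (0:ℝ)) :=
            funext (fun t => by rw [hβ]; simp [h1, h2])
          rw [hfe]
          exact measurable_const
    · intro t ht i hi
      rw [hβ]
      rcases Finset.mem_Icc.mp hi with ⟨hl, hr⟩
      interval_cases i
      · norm_num
        split_ifs <;> norm_num
      · norm_num
        split_ifs <;> norm_num
    · intro t ht
      rw [hβ t 1, hβ t 2]
      norm_num
      split_ifs <;> norm_num
  have hβsum1 : ∀ t, β t 1 + β t 2 = 1 := by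
    intro t
    rw [hβ t 1, hβ t 2]
    norm_num
    split_ifs <;> norm_num
  have hη₀traj := eta0_traj T (ξ0 1) ((ξ0 1 + ξ0 2)/2) t₀ hT ht0pos ha hbar hmatch ξ0 rfl
    (by ring) β hβ
  have hVle : migV2 ξ T ≤ migV2 (eta0 (ξ0 1) ((ξ0 1 + ξ0 2)/2) t₀) T :=
    hmin β _ hβadm hη₀traj
  have hM := traj_main hT hb2 hadm htraj
  have hEpos : 0 < Real.exp (-(T/2)) := Real.exp_pos _
  have hEe : Real.exp (-(1/2 * T)) = Real.exp (-(T/2)) := by congr 1; ring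
  have hEsq : Real.exp (-(T/2)) * Real.exp (-(T/2)) = Real.exp (-T) := by
    rw [← Real.exp_add]; congr 1; ring
  have h0T : (0:ℝ) ∈ Set.Icc (0:ℝ) T := ⟨le_refl _, hT.le⟩
  have hTT : T ∈ Set.Icc (0:ℝ) T := ⟨hT.le, le_refl _⟩
  have hlow : 2 * ((ξ0 1 + ξ0 2)/2) * Real.exp (-(T/2)) ≤ ξ T 1 + ξ T 2 := by
    have h := hM.1 T hTT
    rw [hEe] at h
    linarith
  have h1low : ξ0 1 * Real.exp (-T) ≤ ξ T 1 := by
    have h := hM.2.1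
    rwa [show Real.exp (-(1 * T)) = Real.exp (-T) by norm_num] at h
  have key : t₀ ≤ T → (ξ T 1 = ξ T 2 ∧
      ξ T 1 + ξ T 2 = (ξ0 1 + ξ0 2) * Real.exp (-(1/2 * T))) := by
    intro htT
    have hη1 : eta0 (ξ0 1) ((ξ0 1 + ξ0 2)/2) t₀ T 1
        = ((ξ0 1 + ξ0 2)/2) * Real.exp (-(T/2)) := by
      simp [eta0, not_lt.mpr htT]
    have hη2 : eta0 (ξ0 1) ((ξ0 1 + ξ0 2)/2) t₀ T 2
        = ((ξ0 1 + ξ0 2)/2) * Real.exp (-(T/2)) := by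
      simp [eta0, not_lt.mpr htT]
    have hVT : (ξ T 1)^2 + (ξ T 2)^2 ≤ 2 * (((ξ0 1 + ξ0 2)/2) * Real.exp (-(T/2)))^2 := by
      have h := hVle
      unfold migV2 at h
      rw [hη1, hη2] at h
      linarith
    have hsq2 : (ξ T 1 - ξ T 2)^2 ≤ 0 := by
      nlinarith [hlow, hVT, mul_pos hbar hEpos,
        mul_nonneg (mul_pos hbar hEpos).le (sub_nonneg.mpr hlow)]
    have h0 : (ξ T 1 - ξ T 2)^2 = 0 := le_antisymm hsq2 (sq_nonneg _)
    have hxy : ξ T 1 = ξ T 2 := by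
      have := sq_eq_zero_iff.mp h0
      linarith
    refine ⟨hxy, ?_⟩
    have hx2 : (ξ T 1)^2 ≤ (((ξ0 1 + ξ0 2)/2) * Real.exp (-(T/2)))^2 := by
      rw [← hxy] at hVT
      nlinarith [hVT]
    have hxle : ξ T 1 ≤ ((ξ0 1 + ξ0 2)/2) * Real.exp (-(T/2)) := by
      nlinarith [hx2, mul_pos hbar hEpos]
    rw [hEe]
    linarith [hxle, hlow, hxy]
  refine ⟨⟨fun htT => (key htT).1, ?_⟩, ?_⟩
  · intro heq
    by_contra hn
    push_neg at hn
    have hη1 : eta0 (ξ0 1) ((ξ0 1 + ξ0 2)/2) t₀ T 1 = ξ0 1 * Real.exp (-T) := by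
      simp [eta0, hn]
    have hη2 : eta0 (ξ0 1) ((ξ0 1 + ξ0 2)/2) t₀ T 2
        = 2*((ξ0 1 + ξ0 2)/2) * Real.exp (-(T/2)) - ξ0 1 * Real.exp (-T) := by
      simp [eta0, hn]
    have hppos : 0 < ξ0 1 * Real.exp (-T) := by positivity
    have hqlt : 2*((ξ0 1 + ξ0 2)/2) * Real.exp (-(T/2)) - ξ0 1 * Real.exp (-T)
        < ξ0 1 * Real.exp (-T) := by
      have h5 : Real.exp (-(t₀/2)) < Real.exp (-(T/2)) := Real.exp_lt_exp.mpr (by linarith)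
      rw [hexp_t0] at h5
      have h6 : (ξ0 1 + ξ0 2)/2 < ξ0 1 * Real.exp (-(T/2)) := by
        have h7 := (div_lt_iff₀ ha).mp h5
        linarith
      nlinarith [hEpos, h6, hEsq]
    have hVT : (ξ T 1)^2 + (ξ T 2)^2 ≤ (ξ0 1 * Real.exp (-T))^2
        + (2*((ξ0 1 + ξ0 2)/2) * Real.exp (-(T/2)) - ξ0 1 * Real.exp (-T))^2 := by
      have h := hVle
      unfold migV2 at h
      rw [hη1, hη2] at h
      linarith
    have hpq : (0:ℝ) < 2*((ξ0 1 + ξ0 2)/2) * Real.exp (-(T/2)) := by positivity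
    have hxp : 0 ≤ ξ T 1 + ξ0 1 * Real.exp (-T) := by linarith
    nlinarith [hVT, heq, h1low, hppos, mul_pos (sub_pos.mpr hqlt) hpq,
      mul_nonneg (sub_nonneg.mpr h1low) hxp]
  · intro htT
    obtain ⟨hxy, hsumT⟩ := key htT
    obtain ⟨hae, hsum⟩ := hM.2.2 (Or.inl hsumT)
    refine ⟨hae, ?_, ?_⟩
    · intro t ht
      unfold xbar2
      rw [hsum t ht, show Real.exp (-(1/2 * t)) = Real.exp (-t/2) by congr 1; ring]
      ring
    · intro η hη
      refine ⟨hβadm, hη, ?_⟩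
      have hMη := traj_main hT hb2 hβadm hη
      have hsumη := (hMη.2.2 (Or.inr (fun t _ => hβsum1 t))).2
      have hwc : Continuous
          (fun s => η (cl T s) 1 - eta0 (ξ0 1) ((ξ0 1 + ξ0 2)/2) t₀ (cl T s) 1) :=
        (traj_cont hT hη 1).sub ((eta0_cont _ _ _ hmatch 1).comp (cl_cont T))
      have hw0 : η (cl T 0) 1 - eta0 (ξ0 1) ((ξ0 1 + ξ0 2)/2) t₀ (cl T 0) 1 = 0 := by
        rw [cl_eq h0T, (traj_init hT hη).1]
        simp [eta0, ht0pos]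
      have hidw : ∀ t ∈ Set.Icc (0:ℝ) T,
          (η (cl T t) 1 - eta0 (ξ0 1) ((ξ0 1 + ξ0 2)/2) t₀ (cl T t) 1)
          - (η (cl T 0) 1 - eta0 (ξ0 1) ((ξ0 1 + ξ0 2)/2) t₀ (cl T 0) 1)
          + 1 * ∫ s in (0:ℝ)..t,
              (η (cl T s) 1 - eta0 (ξ0 1) ((ξ0 1 + ξ0 2)/2) t₀ (cl T s) 1) = 0 := by
        intro t ht
        have ha1 := traj_id hT hβadm hη 1 mem12.1 t ht
        have ha2 := traj_id hT hβadm hη₀traj 1 mem12.1 t ht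
        have hQ : (∫ s in (0:ℝ)..t, (1 - β s 1) * ((η (cl T s) 1 + η (cl T s) 2)/2))
            = ∫ s in (0:ℝ)..t, (1 - β s 1) * ((eta0 (ξ0 1) ((ξ0 1 + ξ0 2)/2) t₀ (cl T s) 1
              + eta0 (ξ0 1) ((ξ0 1 + ξ0 2)/2) t₀ (cl T s) 2)/2) := by
          apply intervalIntegral.integral_congr
          intro s _
          have hsum1 : η (cl T s) 1 + η (cl T s) 2
              = eta0 (ξ0 1) ((ξ0 1 + ξ0 2)/2) t₀ (cl T s) 1
                + eta0 (ξ0 1) ((ξ0 1 + ξ0 2)/2) t₀ (cl T s) 2 := by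
            rw [eta0_sum, hsumη (cl T s) (cl_mem hT.le s),
              show Real.exp (-(1/2 * (cl T s))) = Real.exp (-((cl T s)/2)) by congr 1; ring]
            ring
          simp only
          rw [hsum1]
        have hsub : (∫ s in (0:ℝ)..t,
            (η (cl T s) 1 - eta0 (ξ0 1) ((ξ0 1 + ξ0 2)/2) t₀ (cl T s) 1))
            = (∫ s in (0:ℝ)..t, η (cl T s) 1)
              - ∫ s in (0:ℝ)..t, eta0 (ξ0 1) ((ξ0 1 + ξ0 2)/2) t₀ (cl T s) 1 :=
          intervalIntegral.integral_sub ((traj_cont hT hη 1).intervalIntegrable 0 t)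
            (((eta0_cont _ _ _ hmatch 1).comp (cl_cont T)).intervalIntegrable 0 t)
        rw [hsub, cl_eq ht, cl_eq h0T, (traj_init hT hη).1]
        have he0 : eta0 (ξ0 1) ((ξ0 1 + ξ0 2)/2) t₀ 0 1 = ξ0 1 := by
          simp [eta0, ht0pos]
        rw [he0]
        linarith [ha1, ha2, hQ]
      have hwz := volterra_eq 1 one_ne_zero
        (fun s => η (cl T s) 1 - eta0 (ξ0 1) ((ξ0 1 + ξ0 2)/2) t₀ (cl T s) 1) hwc T hidw
      have hwT := hwz T hTT
      rw [hw0, zero_mul] at hwT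
      have hηT1 : η T 1 = eta0 (ξ0 1) ((ξ0 1 + ξ0 2)/2) t₀ T 1 := by
        rw [cl_eq hTT] at hwT
        linarith [hwT]
      have hηT1v : η T 1 = ((ξ0 1 + ξ0 2)/2) * Real.exp (-(T/2)) := by
        rw [hηT1]
        simp [eta0, not_lt.mpr htT]
      have hηT2v : η T 2 = ((ξ0 1 + ξ0 2)/2) * Real.exp (-(T/2)) := by
        have h := hsumη T hTT
        rw [hEe] at h
        linarith [hηT1v, h]
      intro γ η' hγ hη'
      have hlow' := (traj_main hT hb2 hγ hη').1 T hTT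
      rw [hEe] at hlow'
      unfold migV2
      rw [hηT1v, hηT2v]
      nlinarith [hlow', mul_pos hbar hEpos, sq_nonneg (η' T 1 - η' T 2),
        mul_nonneg (mul_pos hbar hEpos).le (sub_nonneg.mpr (by linarith [hlow'] :
          2 * ((ξ0 1 + ξ0 2)/2) * Real.exp (-(T/2)) ≤ η' T 1 + η' T 2))]


end
end

section
/- Let M = 1, ξ⁰_1 ≥ … ≥ ξ⁰_N and ξ̄(0) > 0. Set t_1 = 0 and, for l = 2,…,N, t_l = (N/(N−1)) ln( (l−1)((N−1)/N)(ξ̄_{1,l−1}(0) − ξ⁰_l)/ξ̄(0) + 1 ), where ξ̄_{1,l}(t) = (1/l) ∑_{i=1}^l ξ_i(t). If T ∈ [t_l, t_{l+1}) for some l ∈ {1,…,N−1}, then every full-strength control α whose trajectory satisfies ξ_i(T) = ξ̄_{1,l}(T) for all i ∈ {1,…,l}, with ∑_{i=1}^l α_i(t) = 1 for almost every t and α_i ≡ 0 for all i ∈ {l+1,…,N}, minimizes 𝕍(T) among all full-strength controls with the same initial state. If T ≥ t_N, then every full-strength control whose trajectory satisfies ξ_i(T) = ξ̄(T) for all i ∈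 {1,…,N} minimizes 𝕍(T) among all full-strength controls with the same initial state. -/
open MeasureTheory Real

noncomputable section

/-- An admissible control: measurable, valued in `[0,1]` on `[0,T]` for the agents `1,…,N`,
with total strength at most `M` at every time of `[0,T]`. -/
def IsAdmissible (N : ℕ) (T M : ℝ) (α : ℝ → ℕ → ℝ) : Prop :=
  (∀ i, Measurable fun t => α t i) ∧
  (∀ t ∈ Set.Icc (0 : ℝ) T, ∀ i ∈ Finset.Icc 1 N, 0 ≤ α t i ∧ α t i ≤ 1) ∧
  (∀ t ∈ Set.Icc (0 : ℝ) T, ∑ i ∈ Finset.Icc 1 N, α t i ≤ M)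

/-- A full-strength control: admissible with total strength exactly `1` at every time. -/
def IsFullStrength (N : ℕ) (T : ℝ) (α : ℝ → ℕ → ℝ) : Prop :=
  IsAdmissible N T 1 α ∧ ∀ t ∈ Set.Icc (0 : ℝ) T, ∑ i ∈ Finset.Icc 1 N, α t i = 1

/-- The mean `ξ̄(s) = (1/N) ∑_{j=1}^N ξ_j(s)` of the state. -/
def xbar (N : ℕ) (ξ : ℝ → ℕ → ℝ) (s : ℝ) : ℝ :=
  (N : ℝ)⁻¹ * ∑ j ∈ Finset.Icc 1 N, ξ s j

/-- The trajectory of a control `α` with initial state `ξ0`. -/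
def IsTrajectory (N : ℕ) (T : ℝ) (α : ℝ → ℕ → ℝ) (ξ0 : ℕ → ℝ) (ξ : ℝ → ℕ → ℝ) : Prop :=
  (∀ i, ContinuousOn (fun t => ξ t i) (Set.Icc 0 T)) ∧
  (∀ t ∈ Set.Icc (0 : ℝ) T, ∀ i ∈ Finset.Icc 1 N,
    ξ t i = ξ0 i + ∫ s in (0 : ℝ)..t, (-(ξ s i) + (1 - α s i) * xbar N ξ s))

/-- The migration functional `𝕍(t) = (1/N) ∑_{i=1}^N ξ_i(t)²`. -/
def migV (N : ℕ) (ξ : ℝ → ℕ → ℝ) (t : ℝ) : ℝ :=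
  (N : ℝ)⁻¹ * ∑ i ∈ Finset.Icc 1 N, (ξ t i) ^ 2

/-- The partial mean `ξ̄_{1,l}(t) = (1/l) ∑_{i=1}^l ξ_i(t)`. -/
def pmean (l : ℕ) (ξ : ℝ → ℕ → ℝ) (t : ℝ) : ℝ :=
  (l : ℝ)⁻¹ * ∑ i ∈ Finset.Icc 1 l, ξ t i

/-- The partial mean `(1/l) ∑_{i=1}^l ξ⁰_i` of the initial state. -/
def pmean0 (l : ℕ) (ξ0 : ℕ → ℝ) : ℝ :=
  (l : ℝ)⁻¹ * ∑ i ∈ Finset.Icc 1 l, ξ0 i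

/-- `α` (with trajectory `ξ`) is optimal for the final cost `𝕍(T)` among admissible
controls with the same initial state. -/
def IsOptimalFinal (N : ℕ) (T M : ℝ) (ξ0 : ℕ → ℝ) (α ξ : ℝ → ℕ → ℝ) : Prop :=
  IsAdmissible N T M α ∧ IsTrajectory N T α ξ0 ξ ∧
  ∀ β η, IsAdmissible N T M β → IsTrajectory N T β ξ0 η → migV N ξ T ≤ migV N η T

lemma my_integral_exp_neg_mul {a : ℝ} (ha : a ≠ 0) (u t : ℝ) :
    ∫ s in u..t, Real.exp (-(a * s)) =
      (Real.exp (-(a * u)) - Real.exp (-(a * t))) / a := by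
  have h : ∀ s : ℝ, HasDerivAt (fun x => -Real.exp (-(a * x)) / a) (Real.exp (-(a * s))) s := by
    intro s
    have h1 : HasDerivAt (fun x : ℝ => -(a * x)) (-a) s := by
      simpa using ((hasDerivAt_id s).const_mul (-a))
    have h2 := h1.exp
    have h3 := (h2.div_const a).fun_neg
    have e1 : (fun x => -Real.exp (-(a * x)) / a) = fun i => -(rexp (-(a * i)) / a) := by
      funext x; rw [neg_div]
    have e2 : rexp (-(a * s)) * -a / a = -rexp (-(a * s)) := by
      rw [mul_neg, neg_div, mul_div_assoc, div_self ha, mul_one]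
    rw [e1]
    exact h3.congr_deriv (by rw [e2, neg_neg])
  rw [intervalIntegral.integral_eq_sub_of_hasDerivAt (fun s _ => h s)
    ((Real.continuous_exp.comp (by continuity)).intervalIntegrable _ _)]
  ring

lemma my_integral_exp_mul {a : ℝ} (ha : a ≠ 0) (t : ℝ) :
    ∫ s in (0:ℝ)..t, Real.exp (a * s) = (Real.exp (a * t) - 1) / a := by
  have := my_integral_exp_neg_mul (a := -a) (by simpa using ha) 0 t
  simp only [neg_mul, neg_neg, mul_zero, neg_zero, Real.exp_zero] at this
  rw [this, show (1 - rexp (a*t)) = -(rexp (a*t) - 1) by ring, neg_div_neg_eq]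

lemma theta_eq_zero {T a : ℝ} (ha : 0 ≤ a) {θ : ℝ → ℝ}
    (hθ : ContinuousOn θ (Set.Icc 0 T))
    (heq : ∀ t ∈ Set.Icc (0:ℝ) T, θ t = ∫ s in (0:ℝ)..t, -(a * θ s)) :
    ∀ t ∈ Set.Icc (0:ℝ) T, θ t = 0 := by
  rcases le_or_gt 0 T with hT | hT
  swap
  · intro t ht; exact absurd (ht.1.trans ht.2) (not_le.2 hT)
  have hc : ContinuousOn (fun s => -(a * θ s)) (Set.Icc 0 T) :=
    (continuousOn_const.mul hθ).neg
  have hderiv : ∀ t ∈ Set.Ico (0:ℝ) T, HasDerivWithinAt θ (-(a * θ t)) (Set.Ici t) t := by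
    intro t ht
    have hmem : Set.Icc (0:ℝ) T ∈ nhdsWithin t (Set.Ici t) :=
      Filter.mem_of_superset (Icc_mem_nhdsGE_of_mem ⟨le_rfl, ht.2⟩)
        (Set.Icc_subset_Icc ht.1 le_rfl)
    have hint : IntervalIntegrable (fun s => -(a * θ s)) volume 0 t :=
      (hc.mono (by rw [Set.uIcc_of_le ht.1]; exact Set.Icc_subset_Icc le_rfl ht.2.le)).intervalIntegrable
    have hmem' : Set.Icc (0:ℝ) T ∈ nhdsWithin t (Set.Ioi t) :=
      nhdsWithin_mono t Set.Ioi_subset_Ici_self hmem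
    have hmeas : StronglyMeasurableAtFilter (fun s => -(a * θ s)) (nhdsWithin t (Set.Ioi t)) volume :=
      ⟨Set.Icc 0 T, hmem', hc.aestronglyMeasurable measurableSet_Icc⟩
    have hcont : ContinuousWithinAt (fun s => -(a * θ s)) (Set.Ioi t) t :=
      (hc t ⟨ht.1, ht.2.le⟩).mono_of_mem_nhdsWithin hmem'
    have hF : HasDerivWithinAt (fun u => ∫ s in (0:ℝ)..u, -(a * θ s)) (-(a * θ t)) (Set.Ici t) t :=
      intervalIntegral.integral_hasDerivWithinAt_right hint hmeas hcont
    refine hF.congr_of_eventuallyEq ?_ (heq t ⟨ht.1, ht.2.le⟩)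
    exact Filter.eventually_iff_exists_mem.2 ⟨Set.Icc 0 T, hmem, fun s hs => heq s hs⟩
  have hv : ∀ t : ℝ, LipschitzOnWith ⟨a, ha⟩ (fun x : ℝ => -(a * x)) Set.univ := by
    intro t
    apply LipschitzWith.lipschitzOnWith
    apply LipschitzWith.of_dist_le_mul
    intro x y
    rw [Real.dist_eq, Real.dist_eq, show -(a*x) - -(a*y) = a * (y - x) by ring, abs_mul,
      abs_of_nonneg ha, abs_sub_comm]
    exact le_rfl
  have key := ODE_solution_unique_of_mem_Icc_right (v := fun _ x => -(a * x))
    (s := fun _ => Set.univ) (f := θ) (g := fun _ => (0:ℝ)) (fun t _ => hv t) hθ hderiv (fun _ _ => trivial)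
    continuousOn_const
    (fun t ht => by
      have := hasDerivWithinAt_const t (Set.Ici t) (0:ℝ)
      convert this using 1
      ring)
    (fun _ _ => trivial)
    (by simpa using heq 0 ⟨le_rfl, hT⟩)
  intro t ht
  exact key ht

lemma fubini_triangle {t a : ℝ} (ht : 0 ≤ t) (ha : 0 < a) {w : ℝ → ℝ}
    (hw : IntegrableOn w (Set.Ioc 0 t)) :
    ∫ s in (0:ℝ)..t, Real.exp (-(a*s)) * (∫ u in (0:ℝ)..s, w u) =
    ∫ u in (0:ℝ)..t, ((Real.exp (-(a*u)) - Real.exp (-(a*t)))/a) * w u := by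
  have hexp : Continuous fun s : ℝ => Real.exp (-(a*s)) := by continuity
  have hexpint : IntegrableOn (fun s : ℝ => Real.exp (-(a*s))) (Set.Ioc 0 t) volume :=
    hexp.integrableOn_Ioc
  have hGint : Integrable (fun q : ℝ × ℝ => Real.exp (-(a*q.1)) * w q.2)
      ((volume.restrict (Set.Ioc (0:ℝ) t)).prod (volume.restrict (Set.Ioc (0:ℝ) t))) :=
    Integrable.mul_prod (L := ℝ) hexpint hw
  set F : ℝ × ℝ → ℝ := fun q =>
    Set.indicator {q : ℝ × ℝ | q.2 ≤ q.1} (fun q => Real.exp (-(a*q.1)) * w q.2) q with hF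
  have hsetmeas : MeasurableSet {q : ℝ × ℝ | q.2 ≤ q.1} :=
    measurableSet_le measurable_snd measurable_fst
  have hFint : Integrable F ((volume.restrict (Set.Ioc (0:ℝ) t)).prod
      (volume.restrict (Set.Ioc (0:ℝ) t))) := hGint.indicator hsetmeas
  have hswap := MeasureTheory.integral_integral_swap (f := fun s u => F (s, u)) hFint
  -- LHS equals ∫ s, ∫ u, F (s,u)
  have hL : ∫ s in (0:ℝ)..t, Real.exp (-(a*s)) * (∫ u in (0:ℝ)..s, w u) =
      ∫ s in Set.Ioc (0:ℝ) t, (∫ u in Set.Ioc (0:ℝ) t, F (s, u)) := by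
    rw [intervalIntegral.integral_of_le ht]
    apply setIntegral_congr_fun measurableSet_Ioc
    intro s hs
    dsimp only
    have h1 : (fun u => F (s, u)) = Set.indicator (Set.Iic s) (fun u => Real.exp (-(a*s)) * w u) := by
      funext u
      by_cases h : u ≤ s <;>
        simp [hF, Set.indicator_apply, h, Set.mem_Iic]
    rw [h1, setIntegral_indicator measurableSet_Iic]
    have h2 : Set.Ioc (0:ℝ) t ∩ Set.Iic s = Set.Ioc 0 s := by
      ext x
      simp only [Set.mem_inter_iff, Set.mem_Ioc, Set.mem_Iic]
      constructor
      · rintro ⟨⟨h1', _⟩, h3⟩; exact ⟨h1', h3⟩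
      · rintro ⟨h1', h2'⟩; exact ⟨⟨h1', h2'.trans hs.2⟩, h2'⟩
    rw [h2, intervalIntegral.integral_of_le hs.1.le, integral_const_mul]
  -- RHS equals ∫ u, ∫ s, F (s,u)
  have hR : ∫ u in (0:ℝ)..t, ((Real.exp (-(a*u)) - Real.exp (-(a*t)))/a) * w u =
      ∫ u in Set.Ioc (0:ℝ) t, (∫ s in Set.Ioc (0:ℝ) t, F (s, u)) := by
    rw [intervalIntegral.integral_of_le ht]
    apply setIntegral_congr_fun measurableSet_Ioc
    intro u hu
    dsimp only
    have h1 : (fun s => F (s, u)) = Set.indicator (Set.Ici u) (fun s => Real.exp (-(a*s)) * w u) := by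
      funext s
      by_cases h : u ≤ s <;>
        simp [hF, Set.indicator_apply, h, Set.mem_Ici]
    rw [h1, setIntegral_indicator measurableSet_Ici]
    have h2 : Set.Ioc (0:ℝ) t ∩ Set.Ici u = Set.Icc u t := by
      ext x
      simp only [Set.mem_inter_iff, Set.mem_Ioc, Set.mem_Icc, Set.mem_Ici]
      constructor
      · rintro ⟨⟨_, h3⟩, h4⟩; exact ⟨h4, h3⟩
      · rintro ⟨h3, h4⟩; exact ⟨⟨lt_of_lt_of_le hu.1 h3, h4⟩, h3⟩
    rw [h2, integral_Icc_eq_integral_Ioc, ← intervalIntegral.integral_of_le hu.2]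
    rw [intervalIntegral.integral_mul_const, my_integral_exp_neg_mul (ne_of_gt ha)]
  rw [hL, hR]
  exact hswap

lemma solution_formula {T : ℝ} (hT : 0 ≤ T) {a : ℝ} (ha : 0 < a) (c : ℝ) {g η : ℝ → ℝ}
    (hg : IntegrableOn g (Set.Icc 0 T))
    (hη : ContinuousOn η (Set.Icc 0 T))
    (heq : ∀ t ∈ Set.Icc (0:ℝ) T, η t = c + ∫ s in (0:ℝ)..t, (-(a * η s) + g s)) :
    ∀ t ∈ Set.Icc (0:ℝ) T, η t =
      Real.exp (-(a*t)) * (c + ∫ s in (0:ℝ)..t, Real.exp (a*s) * g s) := by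
  have ha' : (a:ℝ) ≠ 0 := ne_of_gt ha
  set E : ℝ → ℝ := fun s => Real.exp (-(a*s)) with hEdef
  have hEcont : Continuous E := by
    apply Real.continuous_exp.comp
    exact (continuous_const.mul continuous_id).neg
  set w : ℝ → ℝ := fun s => Real.exp (a*s) * g s with hwdef
  have hci : ∀ {f : ℝ → ℝ}, ContinuousOn f (Set.Icc 0 T) → ∀ t ∈ Set.Icc (0:ℝ) T,
      IntervalIntegrable f volume 0 t := by
    intro f hf t htm
    rw [intervalIntegrable_iff_integrableOn_Ioc_of_le htm.1]
    exact ((hf.mono (Set.Icc_subset_Icc le_rfl htm.2)).integrableOn_compact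
      isCompact_Icc).mono Set.Ioc_subset_Icc_self le_rfl
  have hw : IntegrableOn w (Set.Icc 0 T) volume := by
    apply Integrable.bdd_mul (c := Real.exp (a*T)) hg
    · exact (Real.continuous_exp.comp (continuous_const.mul continuous_id)).aestronglyMeasurable
    · refine (ae_restrict_iff' measurableSet_Icc).2 (Filter.Eventually.of_forall ?_)
      intro x hx
      rw [Real.norm_eq_abs, abs_of_pos (Real.exp_pos _)]
      exact Real.exp_le_exp.2 (mul_le_mul_of_nonneg_left hx.2 ha.le)
  have hwsub : ∀ t ∈ Set.Icc (0:ℝ) T, IntervalIntegrable w volume 0 t := by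
    intro t htm
    rw [intervalIntegrable_iff_integrableOn_Ioc_of_le htm.1]
    exact hw.mono ((Set.Ioc_subset_Icc_self).trans (Set.Icc_subset_Icc le_rfl htm.2)) le_rfl
  have hgint : ∀ t ∈ Set.Icc (0:ℝ) T, IntervalIntegrable g volume 0 t := by
    intro t htm
    rw [intervalIntegrable_iff_integrableOn_Ioc_of_le htm.1]
    exact hg.mono ((Set.Ioc_subset_Icc_self).trans (Set.Icc_subset_Icc le_rfl htm.2)) le_rfl
  set H : ℝ → ℝ := fun t => ∫ s in (0:ℝ)..t, w s with hHdef
  have hHcont : ContinuousOn H (Set.Icc 0 T) := by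
    have := intervalIntegral.continuousOn_primitive_interval
      (a := 0) (b := T) (μ := volume) (f := w) (by rwa [Set.uIcc_of_le hT])
    rwa [Set.uIcc_of_le hT] at this
  set φ : ℝ → ℝ := fun t => E t * (c + H t) with hφdef
  have hφcont : ContinuousOn φ (Set.Icc 0 T) :=
    (hEcont.continuousOn).mul (continuousOn_const.add hHcont)
  -- φ satisfies the same integral equation
  have hφeq : ∀ t ∈ Set.Icc (0:ℝ) T, φ t = c + ∫ s in (0:ℝ)..t, (-(a * φ s) + g s) := by
    intro t htm
    have hwIoc : IntegrableOn w (Set.Ioc 0 t) volume :=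
      hw.mono ((Set.Ioc_subset_Icc_self).trans (Set.Icc_subset_Icc le_rfl htm.2)) le_rfl
    have hEH : IntervalIntegrable (fun s => (-a) * (E s * H s)) volume 0 t :=
      hci (continuousOn_const.mul ((hEcont.continuousOn).mul hHcont)) t htm
    have hcE : IntervalIntegrable (fun s => (-(a*c)) * E s) volume 0 t :=
      (continuous_const.mul hEcont).intervalIntegrable _ _
    -- split the integral
    have hstep1 : ∫ s in (0:ℝ)..t, (-(a * φ s) + g s) =
        (∫ s in (0:ℝ)..t, ((-(a*c)) * E s + (-a) * (E s * H s))) + ∫ s in (0:ℝ)..t, g s := by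
      rw [← intervalIntegral.integral_add (hcE.add hEH) (hgint t htm)]
      apply intervalIntegral.integral_congr
      intro s hs
      simp only [hφdef]
      ring
    have hstep2 : ∫ s in (0:ℝ)..t, ((-(a*c)) * E s + (-a) * (E s * H s)) =
        ((-(a*c)) * ((1 - E t)/a)) + (-a) * ∫ s in (0:ℝ)..t, E s * H s := by
      rw [intervalIntegral.integral_add hcE hEH, intervalIntegral.integral_const_mul,
        intervalIntegral.integral_const_mul]
      congr 1
      rw [hEdef]
      rw [my_integral_exp_neg_mul ha' 0 t]
      norm_num
    -- Fubini for the middle term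
    have hstep3 : ∫ s in (0:ℝ)..t, E s * H s =
        a⁻¹ * (∫ s in (0:ℝ)..t, g s) + (-(E t) * a⁻¹) * H t := by
      have hfub := fubini_triangle htm.1 ha hwIoc
      have hEw : ∀ u : ℝ, E u * w u = g u := by
        intro u
        rw [hEdef, hwdef]
        dsimp only
        rw [← mul_assoc, ← Real.exp_add]
        norm_num
      calc ∫ s in (0:ℝ)..t, E s * H s
          = ∫ u in (0:ℝ)..t, ((E u - E t)/a) * w u := hfub
        _ = ∫ u in (0:ℝ)..t, (a⁻¹ * g u + (-(E t) * a⁻¹) * w u) := by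
            apply intervalIntegral.integral_congr
            intro u hu
            dsimp only
            rw [← hEw u]
            field_simp
            ring
        _ = a⁻¹ * (∫ s in (0:ℝ)..t, g s) + (-(E t) * a⁻¹) * H t := by
            rw [intervalIntegral.integral_add ((hgint t htm).const_mul _)
              ((hwsub t htm).const_mul _), intervalIntegral.integral_const_mul,
              intervalIntegral.integral_const_mul]
    rw [hstep1, hstep2, hstep3, hφdef]
    dsimp only
    field_simp
    ring
  -- uniqueness
  have hθ : ∀ t ∈ Set.Icc (0:ℝ) T, η t - φ t = 0 := by
    apply theta_eq_zero ha.le (hη.sub hφcont)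
    intro t htm
    have h1 : IntervalIntegrable (fun s => -(a * η s) + g s) volume 0 t :=
      ((hci ((continuousOn_const.mul hη).neg) t htm).add (hgint t htm))
    have h2 : IntervalIntegrable (fun s => -(a * φ s) + g s) volume 0 t :=
      ((hci ((continuousOn_const.mul hφcont).neg) t htm).add (hgint t htm))
    show η t - φ t = ∫ s in (0:ℝ)..t, -(a * (η s - φ s))
    rw [heq t htm, hφeq t htm]
    rw [show (c + ∫ s in (0:ℝ)..t, (-(a * η s) + g s)) - (c + ∫ s in (0:ℝ)..t, (-(a * φ s) + g s))
      = (∫ s in (0:ℝ)..t, (-(a * η s) + g s)) - ∫ s in (0:ℝ)..t, (-(a * φ s) + g s) by ring]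
    rw [← intervalIntegral.integral_sub h1 h2]
    apply intervalIntegral.integral_congr
    intro s hs
    ring
  intro t htm
  have := hθ t htm
  have hφt : η t = φ t := by linarith
  rw [hφt, hφdef]

lemma xbar_contOn (hη : IsTrajectory N T β ξ0 η) :
    ContinuousOn (xbar N η) (Set.Icc 0 T) := by
  unfold xbar
  exact continuousOn_const.mul (continuousOn_finset_sum _ (fun i _ => hη.1 i))

lemma g_integrable (hβ : IsAdmissible N T 1 β) (hη : IsTrajectory N T β ξ0 η)
    {i : ℕ} (hi : i ∈ Finset.Icc 1 N) :
    IntegrableOn (fun s => (1 - β s i) * xbar N η s) (Set.Icc 0 T) volume := by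
  obtain ⟨C, hC⟩ := isCompact_Icc.exists_bound_of_continuousOn (xbar_contOn hη)
  apply Integrable.mono' (g := fun _ => C)
  · exact integrableOn_const measure_Icc_lt_top.ne
  · exact ((measurable_const.sub (hβ.1 i)).aestronglyMeasurable).mul
      ((xbar_contOn hη).aestronglyMeasurable measurableSet_Icc)
  · refine (ae_restrict_iff' measurableSet_Icc).2 (Filter.Eventually.of_forall ?_)
    intro x hx
    rw [Real.norm_eq_abs, abs_mul]
    have h1 : |1 - β x i| ≤ 1 := by
      have := hβ.2.1 x hx i hi
      rw [abs_le]; constructor <;> [linarith [this.2]; linarith [this.1]]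
    have h2 : |xbar N η x| ≤ C := hC x hx
    have h3 : (0:ℝ) ≤ |xbar N η x| := abs_nonneg _
    nlinarith

lemma integrand_integrable (hβ : IsAdmissible N T 1 β) (hη : IsTrajectory N T β ξ0 η)
    {i : ℕ} (hi : i ∈ Finset.Icc 1 N) :
    IntegrableOn (fun s => -(η s i) + (1 - β s i) * xbar N η s) (Set.Icc 0 T) volume :=
  (((hη.1 i).neg).integrableOn_compact isCompact_Icc).add (g_integrable hβ hη hi)

lemma xbar_formula (hN : 2 ≤ N) (hT : 0 ≤ T) (hβ : IsFullStrength N T β)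
    (hη : IsTrajectory N T β ξ0 η) :
    ∀ t ∈ Set.Icc (0:ℝ) T, xbar N η t = Real.exp (-((N:ℝ)⁻¹ * t)) * pmean0 N ξ0 := by
  have hN0 : (N:ℝ) ≠ 0 := by positivity
  have hNpos : (0:ℝ) < (N:ℝ)⁻¹ := by positivity
  have hii : ∀ t ∈ Set.Icc (0:ℝ) T, ∀ i ∈ Finset.Icc 1 N,
      IntervalIntegrable (fun s => -(η s i) + (1 - β s i) * xbar N η s) volume 0 t := by
    intro t htm i hi
    rw [intervalIntegrable_iff_integrableOn_Ioc_of_le htm.1]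
    exact (integrand_integrable hβ.1 hη hi).mono
      ((Set.Ioc_subset_Icc_self).trans (Set.Icc_subset_Icc le_rfl htm.2)) le_rfl
  have hmean_eq : ∀ t ∈ Set.Icc (0:ℝ) T, xbar N η t =
      pmean0 N ξ0 + ∫ s in (0:ℝ)..t, -((N:ℝ)⁻¹ * xbar N η s) := by
    intro t htm
    have hsum : ∑ i ∈ Finset.Icc 1 N, η t i = ∑ i ∈ Finset.Icc 1 N,
        (ξ0 i + ∫ s in (0:ℝ)..t, (-(η s i) + (1 - β s i) * xbar N η s)) :=
      Finset.sum_congr rfl (fun i hi => hη.2 t htm i hi)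
    have hintsum : ∫ s in (0:ℝ)..t, (∑ i ∈ Finset.Icc 1 N,
          (-(η s i) + (1 - β s i) * xbar N η s)) =
        ∑ i ∈ Finset.Icc 1 N, ∫ s in (0:ℝ)..t, (-(η s i) + (1 - β s i) * xbar N η s) :=
      intervalIntegral.integral_finset_sum (fun i hi => hii t htm i hi)
    have hptwise : ∀ s ∈ Set.uIcc (0:ℝ) t, (∑ i ∈ Finset.Icc 1 N,
        (-(η s i) + (1 - β s i) * xbar N η s)) = -(xbar N η s) := by
      intro s hs
      have hsmem : s ∈ Set.Icc (0:ℝ) T := by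
        rw [Set.uIcc_of_le htm.1] at hs
        exact ⟨hs.1, hs.2.trans htm.2⟩
      have hfull : ∑ i ∈ Finset.Icc 1 N, β s i = 1 := hβ.2 s hsmem
      have hcard : (Finset.Icc 1 N).card = N := by rw [Nat.card_Icc]; omega
      rw [Finset.sum_add_distrib, Finset.sum_neg_distrib, ← Finset.sum_mul,
        Finset.sum_sub_distrib, Finset.sum_const, hcard, hfull]
      have hS : ∑ i ∈ Finset.Icc 1 N, η s i = N * xbar N η s := by
        unfold xbar; field_simp
      rw [hS]
      ring
    have hcongr : ∫ s in (0:ℝ)..t, (∑ i ∈ Finset.Icc 1 N,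
        (-(η s i) + (1 - β s i) * xbar N η s)) = ∫ s in (0:ℝ)..t, -(xbar N η s) :=
      intervalIntegral.integral_congr hptwise
    calc xbar N η t = (N:ℝ)⁻¹ * ∑ j ∈ Finset.Icc 1 N, η t j := rfl
      _ = (N:ℝ)⁻¹ * ∑ i ∈ Finset.Icc 1 N,
            (ξ0 i + ∫ s in (0:ℝ)..t, (-(η s i) + (1 - β s i) * xbar N η s)) := by rw [hsum]
      _ = (N:ℝ)⁻¹ * ((∑ i ∈ Finset.Icc 1 N, ξ0 i) + ∫ s in (0:ℝ)..t, -(xbar N η s)) := by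
            rw [Finset.sum_add_distrib, ← hintsum, hcongr]
      _ = pmean0 N ξ0 + ∫ s in (0:ℝ)..t, -((N:ℝ)⁻¹ * xbar N η s) := by
            rw [mul_add, ← intervalIntegral.integral_const_mul]
            congr 1
            apply intervalIntegral.integral_congr
            intro s hs
            ring
  have := solution_formula hT hNpos (pmean0 N ξ0) (g := fun _ => (0:ℝ))
    (η := xbar N η) (integrableOn_const measure_Icc_lt_top.ne)
    (xbar_contOn hη) (by
      intro t htm
      rw [hmean_eq t htm]
      congr 1
      apply intervalIntegral.integral_congr
      intro s hs
      norm_num)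
  intro t htm
  rw [this t htm]
  simp

lemma beta_integrable (hT : 0 ≤ T) (hβ : IsAdmissible N T 1 β)
    {i : ℕ} (hi : i ∈ Finset.Icc 1 N) :
    IntervalIntegrable (fun s => Real.exp ((1 - (N:ℝ)⁻¹) * s) * β s i) volume 0 T := by
  rw [intervalIntegrable_iff_integrableOn_Ioc_of_le hT]
  apply IntegrableOn.mono (t := Set.Icc (0:ℝ) T) _ Set.Ioc_subset_Icc_self le_rfl
  apply Integrable.mono' (g := fun _ => Real.exp (|1 - (N:ℝ)⁻¹| * T))
  · exact integrableOn_const measure_Icc_lt_top.ne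
  · exact ((Real.continuous_exp.comp (continuous_const.mul continuous_id)).measurable.mul
      (hβ.1 i)).aestronglyMeasurable
  · refine (ae_restrict_iff' measurableSet_Icc).2 (Filter.Eventually.of_forall ?_)
    intro x hx
    rw [Real.norm_eq_abs, abs_mul, abs_of_pos (Real.exp_pos _)]
    have h1 : |β x i| ≤ 1 := by
      have := hβ.2.1 x hx i hi
      rw [abs_le]; constructor <;> linarith [this.1, this.2]
    have h2 : Real.exp ((1 - (N:ℝ)⁻¹) * x) ≤ Real.exp (|1 - (N:ℝ)⁻¹| * T) := by
      apply Real.exp_le_exp.2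
      calc (1 - (N:ℝ)⁻¹) * x ≤ |(1 - (N:ℝ)⁻¹) * x| := le_abs_self _
        _ = |1 - (N:ℝ)⁻¹| * |x| := abs_mul _ _
        _ ≤ |1 - (N:ℝ)⁻¹| * T := by
            apply mul_le_mul_of_nonneg_left _ (abs_nonneg _)
            rw [abs_of_nonneg hx.1]; exact hx.2
    nlinarith [Real.exp_pos ((1 - (N:ℝ)⁻¹) * x), abs_nonneg (β x i)]

lemma u_nonneg (hT : 0 ≤ T) (hβ : IsAdmissible N T 1 β)
    {i : ℕ} (hi : i ∈ Finset.Icc 1 N) :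
    0 ≤ ∫ s in (0:ℝ)..T, Real.exp ((1 - (N:ℝ)⁻¹) * s) * β s i :=
  intervalIntegral.integral_nonneg hT
    (fun u hu => mul_nonneg (Real.exp_pos _).le (hβ.2.1 u hu i hi).1)

lemma u_sum (hT : 0 ≤ T) (hβ : IsFullStrength N T β) :
    ∑ i ∈ Finset.Icc 1 N, ∫ s in (0:ℝ)..T, Real.exp ((1 - (N:ℝ)⁻¹) * s) * β s i =
      ∫ s in (0:ℝ)..T, Real.exp ((1 - (N:ℝ)⁻¹) * s) := by
  rw [← intervalIntegral.integral_finset_sum (fun i hi => beta_integrable hT hβ.1 hi)]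
  apply intervalIntegral.integral_congr
  intro s hs
  rw [Set.uIcc_of_le hT] at hs
  dsimp only
  rw [← Finset.mul_sum, hβ.2 s hs, mul_one]

lemma terminal_formula (hN : 2 ≤ N) (hT : 0 ≤ T) (hβ : IsFullStrength N T β)
    (hη : IsTrajectory N T β ξ0 η) :
    ∀ i ∈ Finset.Icc 1 N, η T i = Real.exp (-T) *
      ((ξ0 i + pmean0 N ξ0 * ∫ s in (0:ℝ)..T, Real.exp ((1 - (N:ℝ)⁻¹) * s)) -
        pmean0 N ξ0 * ∫ s in (0:ℝ)..T, Real.exp ((1 - (N:ℝ)⁻¹) * s) * β s i) := by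
  intro i hi
  have hTm : T ∈ Set.Icc (0:ℝ) T := ⟨hT, le_rfl⟩
  have hsol := solution_formula hT one_pos (ξ0 i)
    (g := fun s => (1 - β s i) * xbar N η s) (η := fun t => η t i)
    (g_integrable hβ.1 hη hi) (hη.1 i)
    (by
      intro t htm
      rw [hη.2 t htm i hi]
      congr 1
      apply intervalIntegral.integral_congr
      intro s hs
      dsimp only
      norm_num) T hTm
  have hint1 : IntervalIntegrable
      (fun s => pmean0 N ξ0 * Real.exp ((1 - (N:ℝ)⁻¹) * s)) volume 0 T :=
    (continuous_const.mul (Real.continuous_exp.comp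
      (continuous_const.mul continuous_id))).intervalIntegrable _ _
  have hint2 : IntervalIntegrable
      (fun s => pmean0 N ξ0 * (Real.exp ((1 - (N:ℝ)⁻¹) * s) * β s i)) volume 0 T :=
    (beta_integrable hT hβ.1 hi).const_mul _
  have hval : ∫ s in (0:ℝ)..T, Real.exp (1*s) * ((1 - β s i) * xbar N η s) =
      pmean0 N ξ0 * (∫ s in (0:ℝ)..T, Real.exp ((1 - (N:ℝ)⁻¹) * s)) -
        pmean0 N ξ0 * ∫ s in (0:ℝ)..T, Real.exp ((1 - (N:ℝ)⁻¹) * s) * β s i := by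
    rw [← intervalIntegral.integral_const_mul, ← intervalIntegral.integral_const_mul,
      ← intervalIntegral.integral_sub hint1 hint2]
    apply intervalIntegral.integral_congr
    intro s hs
    rw [Set.uIcc_of_le hT] at hs
    dsimp only
    rw [xbar_formula hN hT hβ hη s hs,
      show (1 - (N:ℝ)⁻¹) * s = 1*s + -((N:ℝ)⁻¹ * s) by ring, Real.exp_add]
    ring
  rw [hsol, hval, show -(1*T) = -T by ring]
  ring

lemma sum_Icc_split {l n : ℕ} (hln : l ≤ n) (f : ℕ → ℝ) :
    ∑ i ∈ Finset.Icc 1 n, f i =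
      (∑ i ∈ Finset.Icc 1 l, f i) + ∑ i ∈ Finset.Icc (l+1) n, f i := by
  rw [show Finset.Icc 1 n = Finset.Ioc 0 n from Finset.Icc_add_one_left_eq_Ioc 0 n ▸ rfl,
    show Finset.Icc 1 l = Finset.Ioc 0 l from Finset.Icc_add_one_left_eq_Ioc 0 l ▸ rfl,
    show Finset.Icc (l+1) n = Finset.Ioc l n from Finset.Icc_add_one_left_eq_Ioc l n ▸ rfl]
  exact (Finset.sum_Ioc_consecutive f (Nat.zero_le l) hln).symm

lemma qp {n l : ℕ} (hl : 1 ≤ l) (hln : l ≤ n) (d v v' : ℕ → ℝ) (m : ℝ)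
    (hsum : ∑ i ∈ Finset.Icc 1 n, v i = ∑ i ∈ Finset.Icc 1 n, v' i)
    (hv : ∀ i ∈ Finset.Icc 1 n, 0 ≤ v i)
    (hv'0 : ∀ i ∈ Finset.Icc (l+1) n, v' i = 0)
    (hm : ∀ i ∈ Finset.Icc 1 l, d i - v' i = m)
    (hd : ∀ i ∈ Finset.Icc (l+1) n, d i ≤ m) :
    ∑ i ∈ Finset.Icc 1 n, (d i - v' i)^2 ≤ ∑ i ∈ Finset.Icc 1 n, (d i - v i)^2 := by
  have hsub : Finset.Icc (l+1) n ⊆ Finset.Icc 1 n := Finset.Icc_subset_Icc (by omega) le_rfl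
  have h1 : ∑ i ∈ Finset.Icc 1 l, (v' i - v i)*(d i - v' i) =
      m * ∑ i ∈ Finset.Icc (l+1) n, v i := by
    have e1 : ∑ i ∈ Finset.Icc 1 l, (v' i - v i)*(d i - v' i) =
        ∑ i ∈ Finset.Icc 1 l, (v' i - v i)*m :=
      Finset.sum_congr rfl (fun i hi => by rw [hm i hi])
    have e2 : ∑ i ∈ Finset.Icc 1 l, v' i = ∑ i ∈ Finset.Icc 1 n, v i := by
      rw [hsum, sum_Icc_split hln v', Finset.sum_eq_zero hv'0, add_zero]
    rw [e1, ← Finset.sum_mul, Finset.sum_sub_distrib, e2, sum_Icc_split hln v]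
    ring
  have h2 : -(m * ∑ i ∈ Finset.Icc (l+1) n, v i) ≤
      ∑ i ∈ Finset.Icc (l+1) n, (v' i - v i)*(d i - v' i) := by
    rw [Finset.mul_sum, ← Finset.sum_neg_distrib]
    apply Finset.sum_le_sum
    intro i hi
    rw [hv'0 i hi]
    have hvi := hv i (hsub hi)
    have hdi := hd i hi
    nlinarith
  have hcross : 0 ≤ ∑ i ∈ Finset.Icc 1 n, (v' i - v i)*(d i - v' i) := by
    rw [sum_Icc_split hln (fun i => (v' i - v i)*(d i - v' i)), h1]
    linarith
  have hsq : 0 ≤ ∑ i ∈ Finset.Icc 1 n, (v' i - v i)^2 :=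
    Finset.sum_nonneg (fun i _ => sq_nonneg _)
  have hid : ∑ i ∈ Finset.Icc 1 n, (d i - v i)^2 =
      (∑ i ∈ Finset.Icc 1 n, (d i - v' i)^2) + (∑ i ∈ Finset.Icc 1 n, (v' i - v i)^2)
        + 2 * ∑ i ∈ Finset.Icc 1 n, (v' i - v i)*(d i - v' i) := by
    rw [Finset.mul_sum, ← Finset.sum_add_distrib, ← Finset.sum_add_distrib]
    apply Finset.sum_congr rfl
    intro i _
    ring
  linarith

lemma main_compare {N : ℕ} (hN : 2 ≤ N) {T : ℝ} (hT : 0 < T) {ξ0 : ℕ → ℝ}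
    (hbar : 0 < pmean0 N ξ0) {l : ℕ} (hl1 : 1 ≤ l) (hlN : l ≤ N)
    {α ξ : ℝ → ℕ → ℝ} (hα : IsFullStrength N T α) (hξ : IsTrajectory N T α ξ0 ξ)
    (hgather : ∀ i ∈ Finset.Icc 1 l, ξ T i = pmean l ξ T)
    (hzero : ∀ i ∈ Finset.Icc (l+1) N,
      (∫ s in (0:ℝ)..T, Real.exp ((1 - (N:ℝ)⁻¹) * s) * α s i) = 0)
    (hKKT : ∀ i ∈ Finset.Icc (l+1) N, (l:ℝ) * ξ0 i +
      pmean0 N ξ0 * (∫ s in (0:ℝ)..T, Real.exp ((1 - (N:ℝ)⁻¹) * s)) ≤ (l:ℝ) * pmean0 l ξ0)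
    {β η : ℝ → ℕ → ℝ} (hβ : IsFullStrength N T β) (hη : IsTrajectory N T β ξ0 η) :
    migV N ξ T ≤ migV N η T := by
  have hl0 : ((l:ℝ)) ≠ 0 := Nat.cast_ne_zero.2 (by omega)
  have hl0' : (0:ℝ) < (l:ℝ) := Nat.cast_pos.2 (by omega)
  have htα := terminal_formula hN hT.le hα hξ
  have htβ := terminal_formula hN hT.le hβ hη
  have hsumuα := u_sum hT.le hα
  have hsumuβ := u_sum hT.le hβ
  have hsub1 : Finset.Icc 1 l ⊆ Finset.Icc 1 N := Finset.Icc_subset_Icc le_rfl hlN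
  -- abbreviations (only as meta-level shorthands)
  have hm : ∀ i ∈ Finset.Icc 1 l,
      (fun i => ξ0 i + pmean0 N ξ0 * ∫ s in (0:ℝ)..T, Real.exp ((1 - (N:ℝ)⁻¹) * s)) i -
      (fun i => pmean0 N ξ0 * ∫ s in (0:ℝ)..T, Real.exp ((1 - (N:ℝ)⁻¹) * s) * α s i) i =
      Real.exp T * pmean l ξ T := by
    intro i hi
    dsimp only
    have h := htα i (hsub1 hi)
    rw [hgather i hi] at h
    rw [h, ← mul_assoc, ← Real.exp_add]
    norm_num
  have hv'0 : ∀ i ∈ Finset.Icc (l+1) N,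
      (fun i => pmean0 N ξ0 * ∫ s in (0:ℝ)..T, Real.exp ((1 - (N:ℝ)⁻¹) * s) * α s i) i = 0 := by
    intro i hi
    dsimp only
    rw [hzero i hi, mul_zero]
  have hvnn : ∀ i ∈ Finset.Icc 1 N,
      0 ≤ (fun i => pmean0 N ξ0 * ∫ s in (0:ℝ)..T, Real.exp ((1 - (N:ℝ)⁻¹) * s) * β s i) i :=
    fun i hi => mul_nonneg hbar.le (u_nonneg hT.le hβ.1 hi)
  have hsum : ∑ i ∈ Finset.Icc 1 N,
      (fun i => pmean0 N ξ0 * ∫ s in (0:ℝ)..T, Real.exp ((1 - (N:ℝ)⁻¹) * s) * β s i) i =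
      ∑ i ∈ Finset.Icc 1 N,
      (fun i => pmean0 N ξ0 * ∫ s in (0:ℝ)..T, Real.exp ((1 - (N:ℝ)⁻¹) * s) * α s i) i := by
    rw [← Finset.mul_sum, ← Finset.mul_sum, hsumuα, hsumuβ]
  -- the value of m in terms of the data
  have hcard : (Finset.Icc 1 l).card = l := by rw [Nat.card_Icc]; omega
  have hsum_l : ∑ i ∈ Finset.Icc 1 l,
      ((ξ0 i + pmean0 N ξ0 * ∫ s in (0:ℝ)..T, Real.exp ((1 - (N:ℝ)⁻¹) * s)) -
        pmean0 N ξ0 * ∫ s in (0:ℝ)..T, Real.exp ((1 - (N:ℝ)⁻¹) * s) * α s i) =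
      (l:ℝ) * (Real.exp T * pmean l ξ T) := by
    rw [Finset.sum_congr rfl (fun i hi => hm i hi), Finset.sum_const, hcard, nsmul_eq_mul]
  have hzsum : ∑ i ∈ Finset.Icc (l+1) N,
      (∫ s in (0:ℝ)..T, Real.exp ((1 - (N:ℝ)⁻¹) * s) * α s i) = 0 :=
    Finset.sum_eq_zero hzero
  have huα_l : ∑ i ∈ Finset.Icc 1 l,
      (∫ s in (0:ℝ)..T, Real.exp ((1 - (N:ℝ)⁻¹) * s) * α s i) =
      ∫ s in (0:ℝ)..T, Real.exp ((1 - (N:ℝ)⁻¹) * s) := by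
    have hs := sum_Icc_split hlN
      (fun i => ∫ s in (0:ℝ)..T, Real.exp ((1 - (N:ℝ)⁻¹) * s) * α s i)
    rw [hsumuα, hzsum, add_zero] at hs
    linarith
  have hξ0_l : ∑ i ∈ Finset.Icc 1 l, ξ0 i = (l:ℝ) * pmean0 l ξ0 := by
    have hp : pmean0 l ξ0 = (l:ℝ)⁻¹ * ∑ i ∈ Finset.Icc 1 l, ξ0 i := rfl
    rw [hp, ← mul_assoc, mul_inv_cancel₀ hl0, one_mul]
  have hm_val : (l:ℝ) * (Real.exp T * pmean l ξ T) = (l:ℝ) * pmean0 l ξ0 +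
      (l:ℝ) * (pmean0 N ξ0 * ∫ s in (0:ℝ)..T, Real.exp ((1 - (N:ℝ)⁻¹) * s)) -
      pmean0 N ξ0 * ∫ s in (0:ℝ)..T, Real.exp ((1 - (N:ℝ)⁻¹) * s) := by
    rw [← hsum_l, Finset.sum_sub_distrib, Finset.sum_add_distrib, hξ0_l, Finset.sum_const,
      hcard, nsmul_eq_mul, ← Finset.mul_sum, huα_l]
  have hdle : ∀ i ∈ Finset.Icc (l+1) N,
      (fun i => ξ0 i + pmean0 N ξ0 * ∫ s in (0:ℝ)..T, Real.exp ((1 - (N:ℝ)⁻¹) * s)) i ≤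
      Real.exp T * pmean l ξ T := by
    intro i hi
    dsimp only
    have hK := hKKT i hi
    rw [← mul_le_mul_iff_right₀ hl0']
    nlinarith [hm_val, hK]
  have hqp := qp hl1 hlN
    (fun i => ξ0 i + pmean0 N ξ0 * ∫ s in (0:ℝ)..T, Real.exp ((1 - (N:ℝ)⁻¹) * s))
    (fun i => pmean0 N ξ0 * ∫ s in (0:ℝ)..T, Real.exp ((1 - (N:ℝ)⁻¹) * s) * β s i)
    (fun i => pmean0 N ξ0 * ∫ s in (0:ℝ)..T, Real.exp ((1 - (N:ℝ)⁻¹) * s) * α s i)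
    (Real.exp T * pmean l ξ T) hsum hvnn hv'0 hm hdle
  -- conclude on migV
  have hXi : ∑ i ∈ Finset.Icc 1 N, (ξ T i)^2 = Real.exp (-T)^2 *
      ∑ i ∈ Finset.Icc 1 N,
        ((ξ0 i + pmean0 N ξ0 * ∫ s in (0:ℝ)..T, Real.exp ((1 - (N:ℝ)⁻¹) * s)) -
          pmean0 N ξ0 * ∫ s in (0:ℝ)..T, Real.exp ((1 - (N:ℝ)⁻¹) * s) * α s i)^2 := by
    rw [Finset.mul_sum]
    apply Finset.sum_congr rfl
    intro i hi
    rw [htα i hi, mul_pow]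
  have hEta : ∑ i ∈ Finset.Icc 1 N, (η T i)^2 = Real.exp (-T)^2 *
      ∑ i ∈ Finset.Icc 1 N,
        ((ξ0 i + pmean0 N ξ0 * ∫ s in (0:ℝ)..T, Real.exp ((1 - (N:ℝ)⁻¹) * s)) -
          pmean0 N ξ0 * ∫ s in (0:ℝ)..T, Real.exp ((1 - (N:ℝ)⁻¹) * s) * β s i)^2 := by
    rw [Finset.mul_sum]
    apply Finset.sum_congr rfl
    intro i hi
    rw [htβ i hi, mul_pow]
  have hmig1 : migV N ξ T = (N:ℝ)⁻¹ * ∑ i ∈ Finset.Icc 1 N, (ξ T i)^2 := rfl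
  have hmig2 : migV N η T = (N:ℝ)⁻¹ * ∑ i ∈ Finset.Icc 1 N, (η T i)^2 := rfl
  rw [hmig1, hmig2, hXi, hEta]
  apply mul_le_mul_of_nonneg_left _ (by positivity)
  apply mul_le_mul_of_nonneg_left _ (by positivity)
  exact hqp

/-- Optimal full-strength strategy for the final cost (`M = 1`): with the switching times
`t_1 = 0`, `t_l = (N/(N−1)) ln((l−1)((N−1)/N)(ξ̄_{1,l−1}(0) − ξ⁰_l)/ξ̄(0) + 1)`, if
`T ∈ [t_l, t_{l+1})` then any full-strength control gathering the first `l` agents at their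
partial mean at time `T`, using all its strength on them and none on the others, is optimal
among full-strength controls; if `T ≥ t_N`, any full-strength control achieving consensus
`ξ_i(T) = ξ̄(T)` is optimal among full-strength controls. -/
theorem full_control_strategy_final_cost
    (N : ℕ) (hN : 2 ≤ N) (T : ℝ) (hT : 0 < T) (ξ0 : ℕ → ℝ)
    (hord : ∀ i ∈ Finset.Icc 1 N, ∀ j ∈ Finset.Icc 1 N, i ≤ j → ξ0 j ≤ ξ0 i)
    (hbar : 0 < pmean0 N ξ0)
    (tl : ℕ → ℝ) (htl1 : tl 1 = 0)
    (htl : ∀ l : ℕ, 2 ≤ l → l ≤ N → tl l =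
      ((N : ℝ) / ((N : ℝ) - 1)) *
        Real.log (((l : ℝ) - 1) * (((N : ℝ) - 1) / (N : ℝ)) *
          ((pmean0 (l - 1) ξ0 - ξ0 l) / pmean0 N ξ0) + 1)) :
    (∀ l ∈ Finset.Icc 1 (N - 1), tl l ≤ T → T < tl (l + 1) →
      ∀ α ξ, IsFullStrength N T α → IsTrajectory N T α ξ0 ξ →
        (∀ i ∈ Finset.Icc 1 l, ξ T i = pmean l ξ T) →
        (∀ᵐ t ∂volume, t ∈ Set.Icc (0 : ℝ) T → ∑ i ∈ Finset.Icc 1 l, α t i = 1) →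
        (∀ᵐ t ∂volume, t ∈ Set.Icc (0 : ℝ) T → ∀ i ∈ Finset.Icc (l + 1) N, α t i = 0) →
        ∀ β η, IsFullStrength N T β → IsTrajectory N T β ξ0 η →
          migV N ξ T ≤ migV N η T) ∧
    (tl N ≤ T →
      ∀ α ξ, IsFullStrength N T α → IsTrajectory N T α ξ0 ξ →
        (∀ i ∈ Finset.Icc 1 N, ξ T i = xbar N ξ T) →
        ∀ β η, IsFullStrength N T β → IsTrajectory N T β ξ0 η →
          migV N ξ T ≤ migV N η T) := by
  have hNR : (2:ℝ) ≤ (N:ℝ) := by exact_mod_cast hN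
  have hN0 : (N:ℝ) ≠ 0 := by linarith
  set lam : ℝ := 1 - (N:ℝ)⁻¹ with hlam
  have hlampos : 0 < lam := by
    rw [hlam]
    have : (N:ℝ)⁻¹ ≤ 2⁻¹ := by
      apply inv_anti₀ <;> linarith
    norm_num at this ⊢
    linarith
  have hlamne : lam ≠ 0 := ne_of_gt hlampos
  constructor
  · -- case 1
    intro l hlmem _ hTlt α ξ hα hξ hgather _ hae0 β η hβ hη
    rw [Finset.mem_Icc] at hlmem
    have hl1 : 1 ≤ l := hlmem.1
    have hlN : l ≤ N := by omega
    have hl1N : l + 1 ≤ N := by omega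
    have hl0 : ((l:ℝ)) ≠ 0 := Nat.cast_ne_zero.2 (by omega)
    have hl0' : (0:ℝ) < (l:ℝ) := Nat.cast_pos.2 (by omega)
    -- zero integrals for the uncontrolled agents
    have hzero : ∀ i ∈ Finset.Icc (l+1) N,
        (∫ s in (0:ℝ)..T, Real.exp ((1 - (N:ℝ)⁻¹) * s) * α s i) = 0 := by
      intro i hi
      rw [intervalIntegral.integral_of_le hT.le]
      apply MeasureTheory.integral_eq_zero_of_ae
      have haux : ∀ᵐ (x:ℝ) ∂(volume.restrict (Set.Ioc (0:ℝ) T)),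
          Real.exp ((1 - (N:ℝ)⁻¹) * x) * α x i = 0 := by
        rw [MeasureTheory.ae_restrict_iff' measurableSet_Ioc]
        filter_upwards [hae0] with t h ht
        rw [h (Set.Ioc_subset_Icc_self ht) i hi, mul_zero]
      exact haux
    -- KKT condition from T < tl (l+1)
    have hKKT : ∀ i ∈ Finset.Icc (l+1) N, (l:ℝ) * ξ0 i +
        pmean0 N ξ0 * (∫ s in (0:ℝ)..T, Real.exp ((1 - (N:ℝ)⁻¹) * s)) ≤
        (l:ℝ) * pmean0 l ξ0 := by
      have hl1mem : l + 1 ∈ Finset.Icc 1 N := Finset.mem_Icc.2 ⟨by omega, hl1N⟩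
      set P : ℝ := pmean0 l ξ0 - ξ0 (l+1) with hP
      have hPnn : 0 ≤ P := by
        have hsum : (Finset.Icc 1 l).card • ξ0 (l+1) ≤ ∑ i ∈ Finset.Icc 1 l, ξ0 i := by
          rw [← Finset.sum_const]
          apply Finset.sum_le_sum
          intro i hi
          rw [Finset.mem_Icc] at hi
          exact hord i (Finset.mem_Icc.2 ⟨hi.1, by omega⟩) (l+1) hl1mem (by omega)
        rw [Nat.card_Icc, Nat.add_sub_cancel, nsmul_eq_mul] at hsum
        have hpm : pmean0 l ξ0 = (l:ℝ)⁻¹ * ∑ i ∈ Finset.Icc 1 l, ξ0 i := rfl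
        have h2 : (l:ℝ)⁻¹ * ((l:ℝ) * ξ0 (l+1)) ≤ (l:ℝ)⁻¹ * ∑ i ∈ Finset.Icc 1 l, ξ0 i :=
          mul_le_mul_of_nonneg_left hsum (by positivity)
        rw [← mul_assoc, inv_mul_cancel₀ hl0, one_mul] at h2
        rw [hP, hpm]
        linarith
      set K : ℝ := (l:ℝ) * lam * (P / pmean0 N ξ0) with hK
      have hKnn : 0 ≤ K := by
        apply mul_nonneg (mul_nonneg hl0'.le hlampos.le)
        positivity
      have htll : tl (l+1) = lam⁻¹ * Real.log (K + 1) := by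
        rw [htl (l+1) (by omega) hl1N]
        congr 1
        · rw [hlam]
          field_simp
        · congr 1
          rw [hK, Nat.add_sub_cancel]
          push_cast
          rw [hlam]
          congr 2
          field_simp
          ring
      have hlog : lam * T < Real.log (K + 1) := by
        rw [htll] at hTlt
        calc lam * T < lam * (lam⁻¹ * Real.log (K+1)) :=
              mul_lt_mul_of_pos_left hTlt hlampos
          _ = Real.log (K+1) := by field_simp
      have hexplt : Real.exp (lam * T) < K + 1 := by
        have := Real.exp_lt_exp.2 hlog
        rwa [Real.exp_log (by linarith)] at this
      have hAval : (∫ s in (0:ℝ)..T, Real.exp ((1 - (N:ℝ)⁻¹) * s)) =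
          (Real.exp (lam * T) - 1) / lam := by
        rw [← hlam, my_integral_exp_mul hlamne]
      intro i hi
      have hii : i ∈ Finset.Icc 1 N := by
        rw [Finset.mem_Icc] at hi ⊢
        omega
      have hile : ξ0 i ≤ ξ0 (l+1) := by
        rw [Finset.mem_Icc] at hi
        exact hord (l+1) hl1mem i hii hi.1
      have hstep : pmean0 N ξ0 * (∫ s in (0:ℝ)..T, Real.exp ((1 - (N:ℝ)⁻¹) * s)) ≤
          (l:ℝ) * P := by
        rw [hAval]
        have h5 : Real.exp (lam * T) - 1 ≤ K := by linarith
        have h6 := mul_le_mul_of_nonneg_left h5 hbar.le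
        have h3 : pmean0 N ξ0 * K = (l:ℝ) * lam * P := by
          rw [hK]
          field_simp
        rw [← mul_div_assoc, div_le_iff₀ hlampos]
        nlinarith [h6, h3]
      have : (l:ℝ) * ξ0 i ≤ (l:ℝ) * ξ0 (l+1) := by
        apply mul_le_mul_of_nonneg_left hile hl0'.le
      rw [hP] at hstep
      nlinarith
    exact main_compare hN hT hbar hl1 hlN hα hξ hgather hzero hKKT hβ hη
  · -- case 2
    intro _ α ξ hα hξ hgather β η hβ hη
    apply main_compare hN hT hbar (by omega) le_rfl hα hξ
      (fun i hi => hgather i hi) ?_ ?_ hβ hη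
    · intro i hi
      rw [Finset.mem_Icc] at hi
      omega
    · intro i hi
      rw [Finset.mem_Icc] at hi
      omega

end
end
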